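/- arXiv:2302.02033 — 13 statements merged into one kernel-verified Lean document; each statement's English description precedes it below -/
import Mathlib

section
/- Let d : ℝ × ℝ → ℝ be a divergence function satisfying properties (i)–(iv). Let K ≥ 2, let μ ∈ ℝ^K with m = min_a μ_a and M = max_a μ_a, and let γ ∈ ℝ satisfy m < γ < M and μ_a ≠ γ for every a (so μ is γ-feasible). Then sup_{w ∈ Δ_K} inf_{λ ∈ Alt(μ)} Σ_{a=1}^K w_a · d(μ_a, λ_a) = ( d(m,γ)^{-1} + d(M,γ)^{-1} )^{-1}; equivalently, the characteristic time T*(μ), defined as the reciprocal of this sup-inf value, equals 1/d(m,γ) + 1/d(M,γ). (Theorem 1, feasible case.) -/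
open Filter Topology

private lemma sInf_le_of_lt_limit {S : Set ℝ} (hbdd : BddBelow S) {g : ℝ → ℝ}
    (hg : Continuous g) {γ : ℝ} (h : ∀ t, t < γ → g t ∈ S) : sInf S ≤ g γ := by
  have htend : Tendsto g (𝓝[<] γ) (𝓝 (g γ)) :=
    (hg.tendsto γ).mono_left nhdsWithin_le_nhds
  refine ge_of_tendsto htend ?_
  filter_upwards [self_mem_nhdsWithin] with t ht
  exact csInf_le hbdd (h t ht)

private lemma sInf_le_of_gt_limit {S : Set ℝ} (hbdd : BddBelow S) {g : ℝ → ℝ}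
    (hg : Continuous g) {γ : ℝ} (h : ∀ t, γ < t → g t ∈ S) : sInf S ≤ g γ := by
  have htend : Tendsto g (𝓝[>] γ) (𝓝 (g γ)) :=
    (hg.tendsto γ).mono_left nhdsWithin_le_nhds
  refine ge_of_tendsto htend ?_
  filter_upwards [self_mem_nhdsWithin] with t ht
  exact csInf_le hbdd (h t ht)

/-- Theorem 1 (feasible case): the sup-inf value of the pure exploration game
for the one-dimensional CHM problem when `γ` lies in the convex hull of the means. -/
theorem chm_feasible_characteristic_time
    {K : ℕ} (hK : 2 ≤ K) (d : ℝ → ℝ → ℝ)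
    (hd_nonneg : ∀ x y, 0 ≤ d x y)
    (hd_eq_zero : ∀ x y, d x y = 0 ↔ x = y)
    (hd_cont : ∀ x, Continuous fun y => d x y)
    (hd_mono_right_above : ∀ x l l', x ≤ l → l ≤ l' → d x l ≤ d x l')
    (hd_mono_right_below : ∀ x l l', l' ≤ l → l ≤ x → d x l ≤ d x l')
    (hd_mono_left_above : ∀ x x' l, x ≤ x' → x' ≤ l → d x' l ≤ d x l)
    (hd_mono_left_below : ∀ x x' l, l ≤ x' → x' ≤ x → d x' l ≤ d x l)
    (μ : Fin K → ℝ) (γ m M : ℝ)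
    (hm_le : ∀ a, m ≤ μ a) (hm_mem : ∃ a, μ a = m)
    (hM_ge : ∀ a, μ a ≤ M) (hM_mem : ∃ a, μ a = M)
    (hfeas₁ : m < γ) (hfeas₂ : γ < M) (hne : ∀ a, μ a ≠ γ) :
    sSup {v : ℝ | ∃ w : Fin K → ℝ, (∀ a, 0 ≤ w a) ∧ (∑ a, w a) = 1 ∧
        v = sInf {s : ℝ | ∃ lam : Fin K → ℝ,
          ((∀ a, lam a < γ) ∨ (∀ a, γ < lam a)) ∧
          s = ∑ a, w a * d (μ a) (lam a)}} =
      ((d m γ)⁻¹ + (d M γ)⁻¹)⁻¹ := by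
  classical
  obtain ⟨i₀, hi₀⟩ := hm_mem
  obtain ⟨i₁, hi₁⟩ := hM_mem
  have hmM : m < M := lt_trans hfeas₁ hfeas₂
  have hi01 : i₀ ≠ i₁ := by
    intro h; rw [h, hi₁] at hi₀; exact absurd hi₀ (ne_of_gt hmM)
  have dm_ne : d m γ ≠ 0 := fun h => (ne_of_lt hfeas₁) ((hd_eq_zero m γ).mp h)
  have dm_pos : 0 < d m γ := (hd_nonneg m γ).lt_of_ne (Ne.symm dm_ne)
  have dM_ne : d M γ ≠ 0 := fun h => (ne_of_gt hfeas₂) ((hd_eq_zero M γ).mp h)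
  have dM_pos : 0 < d M γ := (hd_nonneg M γ).lt_of_ne (Ne.symm dM_ne)
  set c : ℝ := ((d m γ)⁻¹ + (d M γ)⁻¹)⁻¹ with hc
  have hsum_inv_pos : 0 < (d m γ)⁻¹ + (d M γ)⁻¹ := by positivity
  have c_pos : 0 < c := inv_pos.mpr hsum_inv_pos
  have hc1 : c * (d m γ)⁻¹ + c * (d M γ)⁻¹ = 1 := by
    rw [← mul_add]; exact inv_mul_cancel₀ hsum_inv_pos.ne'
  -- the inner set for a weight vector w
  set InS : (Fin K → ℝ) → Set ℝ := fun w =>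
    {s : ℝ | ∃ lam : Fin K → ℝ,
      ((∀ a, lam a < γ) ∨ (∀ a, γ < lam a)) ∧
      s = ∑ a, w a * d (μ a) (lam a)} with hInS
  have hbdd : ∀ w : Fin K → ℝ, (∀ a, 0 ≤ w a) → BddBelow (InS w) := by
    intro w hw
    refine ⟨0, fun s hs => ?_⟩
    obtain ⟨lam, _, rfl⟩ := hs
    exact Finset.sum_nonneg fun a _ => mul_nonneg (hw a) (hd_nonneg _ _)
  have hne_in : ∀ w : Fin K → ℝ, (InS w).Nonempty := by
    intro w
    exact ⟨∑ a, w a * d (μ a) (γ - 1), fun a => γ - 1,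
      Or.inl (fun a => sub_lt_self γ one_pos), rfl⟩
  -- upper bound: for admissible w, sInf (InS w) ≤ c
  have hupper : ∀ w : Fin K → ℝ, (∀ a, 0 ≤ w a) → (∑ a, w a) = 1 →
      sInf (InS w) ≤ c := by
    intro w hw hw1
    -- approach γ from below
    have hA : sInf (InS w) ≤ ∑ a, w a * d (μ a) (if μ a < γ then μ a else γ) := by
      refine sInf_le_of_lt_limit (hbdd w hw)
        (g := fun t => ∑ a, w a * d (μ a) (if μ a < γ then μ a else t)) ?_ ?_
      · refine continuous_finset_sum _ fun a _ => ?_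
        by_cases h : μ a < γ
        · simp only [if_pos h]; exact continuous_const
        · simp only [if_neg h]; exact continuous_const.mul (hd_cont (μ a))
      · intro t ht
        refine ⟨fun a => if μ a < γ then μ a else t, Or.inl fun a => ?_, rfl⟩
        by_cases h : μ a < γ
        · simpa [h] using h
        · simpa [h] using ht
    -- approach γ from above
    have hB : sInf (InS w) ≤ ∑ a, w a * d (μ a) (if μ a < γ then γ else μ a) := by
      refine sInf_le_of_gt_limit (hbdd w hw)
        (g := fun t => ∑ a, w a * d (μ a) (if μ a < γ then t else μ a)) ?_ ?_
      · refine continuous_finset_sum _ fun a _ => ?_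
        by_cases h : μ a < γ
        · simp only [if_pos h]; exact continuous_const.mul (hd_cont (μ a))
        · simp only [if_neg h]; exact continuous_const
      · intro t ht
        refine ⟨fun a => if μ a < γ then t else μ a, Or.inr fun a => ?_, rfl⟩
        by_cases h : μ a < γ
        · simpa [h] using ht
        · simp only [if_neg h]
          exact lt_of_le_of_ne (not_lt.mp h) (Ne.symm (hne a))
    set Wp : ℝ := ∑ a, (if μ a < γ then 0 else w a) with hWp
    set Wm : ℝ := ∑ a, (if μ a < γ then w a else 0) with hWm
    have hWsum : Wm + Wp = 1 := by
      rw [hWm, hWp, ← Finset.sum_add_distrib, ← hw1]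
      refine Finset.sum_congr rfl fun a _ => ?_
      by_cases h : μ a < γ <;> simp [h]
    have hAle : (∑ a, w a * d (μ a) (if μ a < γ then μ a else γ)) ≤ Wp * d M γ := by
      rw [hWp, Finset.sum_mul]
      refine Finset.sum_le_sum fun a _ => ?_
      by_cases h : μ a < γ
      · simp [h, (hd_eq_zero (μ a) (μ a)).mpr rfl]
      · simp only [if_neg h]
        have hγle : γ ≤ μ a := le_of_lt (lt_of_le_of_ne (not_lt.mp h) (Ne.symm (hne a)))
        exact mul_le_mul_of_nonneg_left
          (hd_mono_left_below M (μ a) γ hγle (hM_ge a)) (hw a)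
    have hBle : (∑ a, w a * d (μ a) (if μ a < γ then γ else μ a)) ≤ Wm * d m γ := by
      rw [hWm, Finset.sum_mul]
      refine Finset.sum_le_sum fun a _ => ?_
      by_cases h : μ a < γ
      · simp only [if_pos h]
        exact mul_le_mul_of_nonneg_left
          (hd_mono_left_above m (μ a) γ (hm_le a) (le_of_lt h)) (hw a)
      · simp [h, (hd_eq_zero (μ a) (μ a)).mpr rfl]
    by_contra hcon
    push_neg at hcon
    have h1 : c < Wp * d M γ := lt_of_lt_of_le hcon (le_trans hA hAle)
    have h2 : c < Wm * d m γ := lt_of_lt_of_le hcon (le_trans hB hBle)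
    have h3 : c * (d M γ)⁻¹ < Wp := by
      rw [← div_eq_mul_inv, div_lt_iff₀ dM_pos]; exact h1
    have h4 : c * (d m γ)⁻¹ < Wm := by
      rw [← div_eq_mul_inv, div_lt_iff₀ dm_pos]; exact h2
    linarith
  -- the optimal weights
  set w : Fin K → ℝ := fun a =>
    (if a = i₀ then c / d m γ else 0) + (if a = i₁ then c / d M γ else 0) with hwdef
  have hw_nonneg : ∀ a, 0 ≤ w a := by
    intro a
    refine add_nonneg ?_ ?_ <;> split <;> positivity
  have hw_sum : (∑ a, w a) = 1 := by
    rw [hwdef]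
    rw [Finset.sum_add_distrib, Finset.sum_ite_eq' Finset.univ i₀ fun _ => c / d m γ,
      Finset.sum_ite_eq' Finset.univ i₁ fun _ => c / d M γ]
    simp only [Finset.mem_univ, if_true]
    rw [div_eq_mul_inv, div_eq_mul_inv]
    exact hc1
  -- the sum for these weights reduces to two terms
  have hsum_eq : ∀ lam : Fin K → ℝ,
      (∑ a, w a * d (μ a) (lam a))
        = c / d m γ * d m (lam i₀) + c / d M γ * d M (lam i₁) := by
    intro lam
    have : (∑ a, w a * d (μ a) (lam a))
        = ∑ a, ((if a = i₀ then c / d m γ * d (μ a) (lam a) else 0)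
            + (if a = i₁ then c / d M γ * d (μ a) (lam a) else 0)) := by
      refine Finset.sum_congr rfl fun a _ => ?_
      rw [hwdef]; ring_nf
      by_cases h0 : a = i₀ <;> by_cases h1 : a = i₁ <;> simp [h0, h1] <;> ring
    rw [this, Finset.sum_add_distrib,
      Finset.sum_ite_eq' Finset.univ i₀ fun a => c / d m γ * d (μ a) (lam a),
      Finset.sum_ite_eq' Finset.univ i₁ fun a => c / d M γ * d (μ a) (lam a)]
    simp [hi₀, hi₁]
  -- lower bound for the inner inf at w
  have hlow : c ≤ sInf (InS w) := by
    refine le_csInf (hne_in w) ?_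
    rintro s ⟨lam, hcond, rfl⟩
    rw [hsum_eq lam]
    rcases hcond with hall | hall
    · have h1 : d M γ ≤ d M (lam i₁) :=
        hd_mono_right_below M γ (lam i₁) (le_of_lt (hall i₁)) (le_of_lt hfeas₂)
      have h2 : c / d M γ * d M γ ≤ c / d M γ * d M (lam i₁) :=
        mul_le_mul_of_nonneg_left h1 (by positivity)
      have h3 : c / d M γ * d M γ = c := div_mul_cancel₀ c dM_ne
      have h4 : 0 ≤ c / d m γ * d m (lam i₀) :=
        mul_nonneg (by positivity) (hd_nonneg _ _)
      linarith
    · have h1 : d m γ ≤ d m (lam i₀) :=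
        hd_mono_right_above m γ (lam i₀) (le_of_lt hfeas₁) (le_of_lt (hall i₀))
      have h2 : c / d m γ * d m γ ≤ c / d m γ * d m (lam i₀) :=
        mul_le_mul_of_nonneg_left h1 (by positivity)
      have h3 : c / d m γ * d m γ = c := div_mul_cancel₀ c dm_ne
      have h4 : 0 ≤ c / d M γ * d M (lam i₁) :=
        mul_nonneg (by positivity) (hd_nonneg _ _)
      linarith
  have heq : sInf (InS w) = c := le_antisymm (hupper w hw_nonneg hw_sum) hlow
  -- conclude
  have hmem : c ∈ {v : ℝ | ∃ w : Fin K → ℝ, (∀ a, 0 ≤ w a) ∧ (∑ a, w a) = 1 ∧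
      v = sInf {s : ℝ | ∃ lam : Fin K → ℝ,
        ((∀ a, lam a < γ) ∨ (∀ a, γ < lam a)) ∧
        s = ∑ a, w a * d (μ a) (lam a)}} :=
    ⟨w, hw_nonneg, hw_sum, heq.symm⟩
  have hub : ∀ v ∈ {v : ℝ | ∃ w : Fin K → ℝ, (∀ a, 0 ≤ w a) ∧ (∑ a, w a) = 1 ∧
      v = sInf {s : ℝ | ∃ lam : Fin K → ℝ,
        ((∀ a, lam a < γ) ∨ (∀ a, γ < lam a)) ∧
        s = ∑ a, w a * d (μ a) (lam a)}}, v ≤ c := by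
    rintro v ⟨w', hw', hw1', rfl⟩
    exact hupper w' hw' hw1'
  exact le_antisymm (csSup_le ⟨c, hmem⟩ hub) (le_csSup ⟨c, hub⟩ hmem)
end

section
/- Let d : ℝ × ℝ → ℝ be a divergence function satisfying properties (i)–(iv). Let K ≥ 2, let μ ∈ ℝ^K have a unique minimizing index a₁ and a unique maximizing index a_K, write m = μ_{a₁}, M = μ_{a_K}, and let γ ∈ ℝ satisfy m < γ < M and μ_a ≠ γ for every a. Define w* ∈ Δ_K by w*_{a₁} = d(m,γ)^{-1} / ( d(m,γ)^{-1} + d(M,γ)^{-1} ), w*_{a_K} = d(M,γ)^{-1} / ( d(m,γ)^{-1} + d(M,γ)^{-1} ), and w*_a = 0 for all other a. Then inf_{λ ∈ Alt(μ)} Σ_{a=1}^K w*_a · d(μ_a, λ_a) = ( d(m,γ)^{-1} + d(M,γ)^{-1} )^{-1}, so w* attains the sup-inf value sup_{w ∈ Δ_K} inf_{λ ∈ Alt(μ)} Σ_a w_a d(μ_a,λ_a). (Theorem 1, feasible case: oracle weights.) -/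
/-- Theorem 1 (feasible case, oracle weights): the weight vector putting mass
inversely proportional to `d(m,γ)` and `d(M,γ)` on the unique minimizing and
maximizing arms attains the sup-inf value of the pure exploration game. -/
theorem chm_feasible_oracle_weights
    {K : ℕ} (hK : 2 ≤ K) (d : ℝ → ℝ → ℝ)
    (hd_nonneg : ∀ x y, 0 ≤ d x y)
    (hd_eq_zero : ∀ x y, d x y = 0 ↔ x = y)
    (hd_cont : ∀ x, Continuous fun y => d x y)
    (hd_mono_right_above : ∀ x l l', x ≤ l → l ≤ l' → d x l ≤ d x l')
    (hd_mono_right_below : ∀ x l l', l' ≤ l → l ≤ x → d x l ≤ d x l')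
    (hd_mono_left_above : ∀ x x' l, x ≤ x' → x' ≤ l → d x' l ≤ d x l)
    (hd_mono_left_below : ∀ x x' l, l ≤ x' → x' ≤ x → d x' l ≤ d x l)
    (μ : Fin K → ℝ) (γ m M : ℝ) (a₁ aK : Fin K)
    (ha₁_min : ∀ a, a ≠ a₁ → μ a₁ < μ a)
    (haK_max : ∀ a, a ≠ aK → μ a < μ aK)
    (hm : μ a₁ = m) (hM : μ aK = M)
    (hfeas₁ : m < γ) (hfeas₂ : γ < M) (hne : ∀ a, μ a ≠ γ)
    (wstar : Fin K → ℝ)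
    (hwstar : wstar = fun a =>
      if a = a₁ then (d m γ)⁻¹ / ((d m γ)⁻¹ + (d M γ)⁻¹)
      else if a = aK then (d M γ)⁻¹ / ((d m γ)⁻¹ + (d M γ)⁻¹)
      else 0) :
    sInf {s : ℝ | ∃ lam : Fin K → ℝ,
        ((∀ a, lam a < γ) ∨ (∀ a, γ < lam a)) ∧
        s = ∑ a, wstar a * d (μ a) (lam a)} =
      ((d m γ)⁻¹ + (d M γ)⁻¹)⁻¹ ∧
    sInf {s : ℝ | ∃ lam : Fin K → ℝ,
        ((∀ a, lam a < γ) ∨ (∀ a, γ < lam a)) ∧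
        s = ∑ a, wstar a * d (μ a) (lam a)} =
      sSup {v : ℝ | ∃ w : Fin K → ℝ, (∀ a, 0 ≤ w a) ∧ (∑ a, w a) = 1 ∧
        v = sInf {s : ℝ | ∃ lam : Fin K → ℝ,
          ((∀ a, lam a < γ) ∨ (∀ a, γ < lam a)) ∧
          s = ∑ a, w a * d (μ a) (lam a)}} := by
  classical
  have hmM : m < M := hfeas₁.trans hfeas₂
  have hDm : 0 < d m γ := by
    rcases lt_or_eq_of_le (hd_nonneg m γ) with h | h
    · exact h
    · exact absurd ((hd_eq_zero m γ).mp h.symm) (ne_of_lt hfeas₁)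
  have hDM : 0 < d M γ := by
    rcases lt_or_eq_of_le (hd_nonneg M γ) with h | h
    · exact h
    · exact absurd ((hd_eq_zero M γ).mp h.symm) (ne_of_gt hfeas₂)
  have hApos : 0 < (d m γ)⁻¹ := inv_pos.mpr hDm
  have hBpos : 0 < (d M γ)⁻¹ := inv_pos.mpr hDM
  have hSpos : 0 < (d m γ)⁻¹ + (d M γ)⁻¹ := add_pos hApos hBpos
  have hane : a₁ ≠ aK := by
    intro h
    rw [h, hM] at hm
    exact hmM.ne' hm
  have hμle : ∀ a, μ a ≤ M := by
    intro a
    by_cases h : a = aK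
    · rw [h, hM]
    · exact hM ▸ (haK_max a h).le
  have hμge : ∀ a, m ≤ μ a := by
    intro a
    by_cases h : a = a₁
    · rw [h, hm]
    · exact hm ▸ (ha₁_min a h).le
  -- the key upper bound, valid for any weight vector in the simplex
  have key : ∀ w : Fin K → ℝ, (∀ a, 0 ≤ w a) → (∑ a, w a) = 1 →
      sInf {s : ℝ | ∃ lam : Fin K → ℝ,
        ((∀ a, lam a < γ) ∨ (∀ a, γ < lam a)) ∧
        s = ∑ a, w a * d (μ a) (lam a)} ≤ ((d m γ)⁻¹ + (d M γ)⁻¹)⁻¹ := by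
    intro w hw0 hw1
    set T := {s : ℝ | ∃ lam : Fin K → ℝ, ((∀ a, lam a < γ) ∨ (∀ a, γ < lam a)) ∧
        s = ∑ a, w a * d (μ a) (lam a)} with hT
    have hbdd : BddBelow T := by
      refine ⟨0, ?_⟩
      rintro s ⟨lam, _, rfl⟩
      exact Finset.sum_nonneg fun a _ => mul_nonneg (hw0 a) (hd_nonneg _ _)
    have h1 : sInf T ≤ ∑ a ∈ Finset.filter (fun a => ¬ μ a < γ) Finset.univ,
        w a * d (μ a) γ := by
      have hcont : Continuous fun y =>
          ∑ a ∈ Finset.filter (fun a => ¬ μ a < γ) Finset.univ, w a * d (μ a) y :=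
        continuous_finset_sum _ fun a _ => continuous_const.mul (hd_cont (μ a))
      have htt : Filter.Tendsto (fun y =>
          ∑ a ∈ Finset.filter (fun a => ¬ μ a < γ) Finset.univ, w a * d (μ a) y)
          (nhdsWithin γ (Set.Iio γ))
          (nhds (∑ a ∈ Finset.filter (fun a => ¬ μ a < γ) Finset.univ, w a * d (μ a) γ)) :=
        (hcont.tendsto γ).mono_left nhdsWithin_le_nhds
      refine ge_of_tendsto htt ?_
      filter_upwards [self_mem_nhdsWithin] with y hy
      have hy' : y < γ := hy
      refine csInf_le hbdd ⟨fun a => if μ a < γ then μ a else y, Or.inl fun a => ?_, ?_⟩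
      · by_cases h : μ a < γ <;> simp [h, hy']
      · rw [Finset.sum_filter]
        refine (Finset.sum_congr rfl fun a _ => ?_).symm
        by_cases h : μ a < γ
        · simp [h, (hd_eq_zero (μ a) (μ a)).mpr rfl]
        · simp [h]
    have h2 : sInf T ≤ ∑ a ∈ Finset.filter (fun a => μ a < γ) Finset.univ,
        w a * d (μ a) γ := by
      have hcont : Continuous fun y =>
          ∑ a ∈ Finset.filter (fun a => μ a < γ) Finset.univ, w a * d (μ a) y :=
        continuous_finset_sum _ fun a _ => continuous_const.mul (hd_cont (μ a))
      have htt : Filter.Tendsto (fun y =>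
          ∑ a ∈ Finset.filter (fun a => μ a < γ) Finset.univ, w a * d (μ a) y)
          (nhdsWithin γ (Set.Ioi γ))
          (nhds (∑ a ∈ Finset.filter (fun a => μ a < γ) Finset.univ, w a * d (μ a) γ)) :=
        (hcont.tendsto γ).mono_left nhdsWithin_le_nhds
      refine ge_of_tendsto htt ?_
      filter_upwards [self_mem_nhdsWithin] with y hy
      have hy' : γ < y := hy
      refine csInf_le hbdd ⟨fun a => if μ a < γ then y else μ a, Or.inr fun a => ?_, ?_⟩
      · by_cases h : μ a < γ
        · simpa [h] using hy'
        · simpa [h] using lt_of_le_of_ne (not_lt.mp h) (Ne.symm (hne a))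
      · rw [Finset.sum_filter]
        refine (Finset.sum_congr rfl fun a _ => ?_).symm
        by_cases h : μ a < γ
        · simp [h]
        · simp [h, (hd_eq_zero (μ a) (μ a)).mpr rfl]
    have h1' : sInf T ≤ (∑ a ∈ Finset.filter (fun a => ¬ μ a < γ) Finset.univ, w a)
        * d M γ := by
      refine h1.trans ?_
      rw [Finset.sum_mul]
      refine Finset.sum_le_sum fun a ha => ?_
      have hgt : γ ≤ μ a := not_lt.mp (Finset.mem_filter.mp ha).2
      exact mul_le_mul_of_nonneg_left
        (hd_mono_left_below M (μ a) γ hgt (hμle a)) (hw0 a)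
    have h2' : sInf T ≤ (∑ a ∈ Finset.filter (fun a => μ a < γ) Finset.univ, w a)
        * d m γ := by
      refine h2.trans ?_
      rw [Finset.sum_mul]
      refine Finset.sum_le_sum fun a ha => ?_
      have hlt : μ a ≤ γ := (Finset.mem_filter.mp ha).2.le
      exact mul_le_mul_of_nonneg_left
        (hd_mono_left_above m (μ a) γ (hμge a) hlt) (hw0 a)
    by_contra hcon
    push_neg at hcon
    have hwp := lt_of_lt_of_le hcon h1'
    have hwm := lt_of_lt_of_le hcon h2'
    have h3 : ((d m γ)⁻¹ + (d M γ)⁻¹)⁻¹ * (d M γ)⁻¹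
        < ∑ a ∈ Finset.filter (fun a => ¬ μ a < γ) Finset.univ, w a := by
      have h := mul_lt_mul_of_pos_right hwp hBpos
      rwa [mul_assoc, mul_inv_cancel₀ hDM.ne', mul_one] at h
    have h4 : ((d m γ)⁻¹ + (d M γ)⁻¹)⁻¹ * (d m γ)⁻¹
        < ∑ a ∈ Finset.filter (fun a => μ a < γ) Finset.univ, w a := by
      have h := mul_lt_mul_of_pos_right hwm hApos
      rwa [mul_assoc, mul_inv_cancel₀ hDm.ne', mul_one] at h
    have hsplit : (∑ a ∈ Finset.filter (fun a => μ a < γ) Finset.univ, w a)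
        + (∑ a ∈ Finset.filter (fun a => ¬ μ a < γ) Finset.univ, w a) = 1 := by
      rw [Finset.sum_filter_add_sum_filter_not]
      exact hw1
    have h5 : ((d m γ)⁻¹ + (d M γ)⁻¹)⁻¹ * (d m γ)⁻¹
        + ((d m γ)⁻¹ + (d M γ)⁻¹)⁻¹ * (d M γ)⁻¹ = 1 := by
      rw [← mul_add]
      exact inv_mul_cancel₀ hSpos.ne'
    linarith
  -- the sum against wstar only involves the extreme coordinates
  have hsum : ∀ f : Fin K → ℝ, ∑ a, wstar a * f a
      = (d m γ)⁻¹ / ((d m γ)⁻¹ + (d M γ)⁻¹) * f a₁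
        + (d M γ)⁻¹ / ((d m γ)⁻¹ + (d M γ)⁻¹) * f aK := by
    intro f
    have h1 : ∑ a, wstar a * f a = ∑ a ∈ ({a₁, aK} : Finset (Fin K)), wstar a * f a := by
      symm
      apply Finset.sum_subset (Finset.subset_univ _)
      intro x _ hx
      simp only [Finset.mem_insert, Finset.mem_singleton, not_or] at hx
      rw [hwstar]
      simp [hx.1, hx.2]
    rw [h1, Finset.sum_pair hane, hwstar]
    simp [hane, Ne.symm hane]
  have hw0' : ∀ a, 0 ≤ wstar a := by
    intro a
    rw [hwstar]
    dsimp only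
    split_ifs <;> positivity
  have hw1' : (∑ a, wstar a) = 1 := by
    have h := hsum (fun _ => 1)
    simp only [mul_one] at h
    rw [h, ← add_div, div_self hSpos.ne']
  -- the lower bound for wstar
  have hlb : ∀ s ∈ {s : ℝ | ∃ lam : Fin K → ℝ,
      ((∀ a, lam a < γ) ∨ (∀ a, γ < lam a)) ∧
      s = ∑ a, wstar a * d (μ a) (lam a)},
      ((d m γ)⁻¹ + (d M γ)⁻¹)⁻¹ ≤ s := by
    rintro s ⟨lam, hcase, rfl⟩
    rw [hsum (fun a => d (μ a) (lam a)), hm, hM]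
    rcases hcase with hc | hc
    · have hd1 : d M γ ≤ d M (lam aK) :=
        hd_mono_right_below M γ (lam aK) (hc aK).le hfeas₂.le
      have ht : (d M γ)⁻¹ / ((d m γ)⁻¹ + (d M γ)⁻¹) * d M γ
          = ((d m γ)⁻¹ + (d M γ)⁻¹)⁻¹ := by
        field_simp
        try ring
      have h0 : 0 ≤ (d m γ)⁻¹ / ((d m γ)⁻¹ + (d M γ)⁻¹) * d m (lam a₁) :=
        mul_nonneg (div_nonneg hApos.le hSpos.le) (hd_nonneg _ _)
      have h1 : (d M γ)⁻¹ / ((d m γ)⁻¹ + (d M γ)⁻¹) * d M γ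
          ≤ (d M γ)⁻¹ / ((d m γ)⁻¹ + (d M γ)⁻¹) * d M (lam aK) :=
        mul_le_mul_of_nonneg_left hd1 (div_nonneg hBpos.le hSpos.le)
      linarith [ht ▸ h1]
    · have hd1 : d m γ ≤ d m (lam a₁) :=
        hd_mono_right_above m γ (lam a₁) hfeas₁.le (hc a₁).le
      have ht : (d m γ)⁻¹ / ((d m γ)⁻¹ + (d M γ)⁻¹) * d m γ
          = ((d m γ)⁻¹ + (d M γ)⁻¹)⁻¹ := by
        field_simp
        try ring
      have h0 : 0 ≤ (d M γ)⁻¹ / ((d m γ)⁻¹ + (d M γ)⁻¹) * d M (lam aK) :=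
        mul_nonneg (div_nonneg hBpos.le hSpos.le) (hd_nonneg _ _)
      have h1 : (d m γ)⁻¹ / ((d m γ)⁻¹ + (d M γ)⁻¹) * d m γ
          ≤ (d m γ)⁻¹ / ((d m γ)⁻¹ + (d M γ)⁻¹) * d m (lam a₁) :=
        mul_le_mul_of_nonneg_left hd1 (div_nonneg hApos.le hSpos.le)
      linarith [ht ▸ h1]
  have hTne : {s : ℝ | ∃ lam : Fin K → ℝ,
      ((∀ a, lam a < γ) ∨ (∀ a, γ < lam a)) ∧
      s = ∑ a, wstar a * d (μ a) (lam a)}.Nonempty :=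
    ⟨_, fun _ => m, Or.inl fun _ => hfeas₁, rfl⟩
  have hInf : sInf {s : ℝ | ∃ lam : Fin K → ℝ,
      ((∀ a, lam a < γ) ∨ (∀ a, γ < lam a)) ∧
      s = ∑ a, wstar a * d (μ a) (lam a)} = ((d m γ)⁻¹ + (d M γ)⁻¹)⁻¹ :=
    le_antisymm (key wstar hw0' hw1') (le_csInf hTne hlb)
  have hSup : sSup {v : ℝ | ∃ w : Fin K → ℝ, (∀ a, 0 ≤ w a) ∧ (∑ a, w a) = 1 ∧
      v = sInf {s : ℝ | ∃ lam : Fin K → ℝ,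
        ((∀ a, lam a < γ) ∨ (∀ a, γ < lam a)) ∧
        s = ∑ a, w a * d (μ a) (lam a)}} = ((d m γ)⁻¹ + (d M γ)⁻¹)⁻¹ := by
    refine le_antisymm (csSup_le ⟨_, wstar, hw0', hw1', hInf.symm⟩ ?_)
      (le_csSup ⟨((d m γ)⁻¹ + (d M γ)⁻¹)⁻¹, ?_⟩ ⟨wstar, hw0', hw1', hInf.symm⟩)
    · rintro v ⟨w, hw0, hw1, rfl⟩
      exact key w hw0 hw1
    · rintro v ⟨w, hw0, hw1, rfl⟩
      exact key w hw0 hw1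
  exact ⟨hInf, hInf.trans hSup.symm⟩
end

section
/- Let d : ℝ × ℝ → ℝ be a divergence function satisfying properties (i)–(iii). Let K ≥ 1, let μ ∈ ℝ^K, and let γ ∈ ℝ satisfy γ < min_a μ_a or γ > max_a μ_a (so μ is γ-infeasible). Then sup_{w ∈ Δ_K} inf_{λ ∈ Alt(μ)} Σ_{a=1}^K w_a · d(μ_a, λ_a) = ( Σ_{a=1}^K d(μ_a,γ)^{-1} )^{-1}; equivalently, the characteristic time T*(μ), defined as the reciprocal of this sup-inf value, equals Σ_{a=1}^K 1/d(μ_a,γ). (Theorem 1, infeasible case.) -/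
/-- Theorem 1 (infeasible case): the sup-inf value of the pure exploration game
for the one-dimensional CHM problem when `γ` lies outside the convex hull of the means. -/
theorem chm_infeasible_characteristic_time
    {K : ℕ} (hK : 1 ≤ K) (d : ℝ → ℝ → ℝ)
    (hd_nonneg : ∀ x y, 0 ≤ d x y)
    (hd_eq_zero : ∀ x y, d x y = 0 ↔ x = y)
    (hd_cont : ∀ x, Continuous fun y => d x y)
    (hd_mono_right_above : ∀ x l l', x ≤ l → l ≤ l' → d x l ≤ d x l')
    (hd_mono_right_below : ∀ x l l', l' ≤ l → l ≤ x → d x l ≤ d x l')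
    (μ : Fin K → ℝ) (γ : ℝ)
    (hinfeas : (∀ a, γ < μ a) ∨ (∀ a, μ a < γ)) :
    sSup {v : ℝ | ∃ w : Fin K → ℝ, (∀ a, 0 ≤ w a) ∧ (∑ a, w a) = 1 ∧
        v = sInf {s : ℝ | ∃ lam : Fin K → ℝ,
          ((∃ a, lam a ≤ γ) ∧ (∃ a, γ ≤ lam a)) ∧
          s = ∑ a, w a * d (μ a) (lam a)}} =
      (∑ a, (d (μ a) γ)⁻¹)⁻¹ := by
  haveI : Nonempty (Fin K) := ⟨⟨0, hK⟩⟩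
  have hne : (Finset.univ : Finset (Fin K)).Nonempty := Finset.univ_nonempty
  set c : Fin K → ℝ := fun a => d (μ a) γ with hc_def
  have hμγ : ∀ a, μ a ≠ γ := by
    intro a; rcases hinfeas with h | h
    · exact (h a).ne'
    · exact (h a).ne
  have hc_pos : ∀ a, 0 < c a := fun a =>
    lt_of_le_of_ne (hd_nonneg _ _) (fun h => hμγ a ((hd_eq_zero _ _).mp h.symm))
  set S : ℝ := ∑ a, (c a)⁻¹ with hS_def
  have hS_pos : 0 < S := Finset.sum_pos (fun a _ => inv_pos.mpr (hc_pos a)) hne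
  -- the inner infimum equals the minimum of w a * c a
  have key : ∀ w : Fin K → ℝ, (∀ a, 0 ≤ w a) →
      sInf {s : ℝ | ∃ lam : Fin K → ℝ,
          ((∃ a, lam a ≤ γ) ∧ (∃ a, γ ≤ lam a)) ∧
          s = ∑ a, w a * d (μ a) (lam a)}
        = Finset.univ.inf' hne (fun a => w a * c a) := by
    intro w hw
    have hmem : ∀ b : Fin K, w b * c b ∈ {s : ℝ | ∃ lam : Fin K → ℝ,
        ((∃ a, lam a ≤ γ) ∧ (∃ a, γ ≤ lam a)) ∧
        s = ∑ a, w a * d (μ a) (lam a)} := by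
      intro b
      refine ⟨Function.update μ b γ, ⟨⟨b, by simp⟩, ⟨b, by simp⟩⟩, ?_⟩
      rw [Finset.sum_eq_single b]
      · simp [hc_def]
      · intro a _ hab
        rw [Function.update_of_ne hab, (hd_eq_zero _ _).mpr rfl, mul_zero]
      · intro h; exact absurd (Finset.mem_univ b) h
    have hbdd : BddBelow {s : ℝ | ∃ lam : Fin K → ℝ,
        ((∃ a, lam a ≤ γ) ∧ (∃ a, γ ≤ lam a)) ∧
        s = ∑ a, w a * d (μ a) (lam a)} := by
      refine ⟨0, fun s hs => ?_⟩
      obtain ⟨lam, _, rfl⟩ := hs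
      exact Finset.sum_nonneg fun a _ => mul_nonneg (hw a) (hd_nonneg _ _)
    apply le_antisymm
    · obtain ⟨b, _, hb⟩ := Finset.exists_mem_eq_inf' hne (fun a => w a * c a)
      rw [hb]
      exact csInf_le hbdd (hmem b)
    · apply le_csInf ⟨_, hmem (Classical.arbitrary _)⟩
      rintro s ⟨lam, ⟨⟨a₁, ha₁⟩, ⟨a₂, ha₂⟩⟩, rfl⟩
      rcases hinfeas with h | h
      · calc Finset.univ.inf' hne (fun a => w a * c a) ≤ w a₁ * c a₁ :=
              Finset.inf'_le _ (Finset.mem_univ a₁)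
          _ ≤ w a₁ * d (μ a₁) (lam a₁) := by
              apply mul_le_mul_of_nonneg_left _ (hw a₁)
              exact hd_mono_right_below (μ a₁) γ (lam a₁) ha₁ (h a₁).le
          _ ≤ ∑ a, w a * d (μ a) (lam a) :=
              Finset.single_le_sum
                (fun a _ => mul_nonneg (hw a) (hd_nonneg _ _)) (Finset.mem_univ a₁)
      · calc Finset.univ.inf' hne (fun a => w a * c a) ≤ w a₂ * c a₂ :=
              Finset.inf'_le _ (Finset.mem_univ a₂)
          _ ≤ w a₂ * d (μ a₂) (lam a₂) := by
              apply mul_le_mul_of_nonneg_left _ (hw a₂)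
              exact hd_mono_right_above (μ a₂) γ (lam a₂) (h a₂).le ha₂
          _ ≤ ∑ a, w a * d (μ a) (lam a) :=
              Finset.single_le_sum
                (fun a _ => mul_nonneg (hw a) (hd_nonneg _ _)) (Finset.mem_univ a₂)
  -- upper bound for the minimum over any w in the simplex
  have upper : ∀ w : Fin K → ℝ, (∀ a, 0 ≤ w a) → (∑ a, w a) = 1 →
      Finset.univ.inf' hne (fun a => w a * c a) ≤ S⁻¹ := by
    intro w hw hw1
    by_contra hcon
    push_neg at hcon
    have hlt : ∀ a : Fin K, (c a)⁻¹ * S⁻¹ < w a := by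
      intro a
      have h1 : S⁻¹ < w a * c a :=
        lt_of_lt_of_le hcon (Finset.inf'_le _ (Finset.mem_univ a))
      have := (div_lt_iff₀ (hc_pos a)).mpr (by linarith [h1] : S⁻¹ < w a * c a)
      calc (c a)⁻¹ * S⁻¹ = S⁻¹ / c a := by ring
        _ < w a := this
    have : (1 : ℝ) < 1 := by
      calc (1 : ℝ) = S * S⁻¹ := (mul_inv_cancel₀ hS_pos.ne').symm
        _ = ∑ a, (c a)⁻¹ * S⁻¹ := by rw [hS_def, Finset.sum_mul]
        _ < ∑ a, w a := Finset.sum_lt_sum_of_nonempty hne (fun a _ => hlt a)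
        _ = 1 := hw1
    exact absurd this (lt_irrefl 1)
  apply le_antisymm
  · apply csSup_le
    · exact ⟨_, ⟨fun a => (c a)⁻¹ * S⁻¹,
        fun a => mul_nonneg (inv_pos.mpr (hc_pos a)).le (inv_pos.mpr hS_pos).le,
        by rw [← Finset.sum_mul, ← hS_def, mul_inv_cancel₀ hS_pos.ne'], rfl⟩⟩
    · rintro v ⟨w, hw, hw1, rfl⟩
      rw [key w hw]
      exact upper w hw hw1
  · have hval : Finset.univ.inf' hne
        (fun a => ((c a)⁻¹ * S⁻¹) * c a) = S⁻¹ := by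
      have : ∀ a : Fin K, ((c a)⁻¹ * S⁻¹) * c a = S⁻¹ := by
        intro a
        rw [mul_right_comm, inv_mul_cancel₀ (hc_pos a).ne', one_mul]
      rw [show (fun a => ((c a)⁻¹ * S⁻¹) * c a) = fun _ => S⁻¹ from funext this]
      exact Finset.inf'_const hne _
    have hmem2 : S⁻¹ ∈ {v : ℝ | ∃ w : Fin K → ℝ, (∀ a, 0 ≤ w a) ∧ (∑ a, w a) = 1 ∧
        v = sInf {s : ℝ | ∃ lam : Fin K → ℝ,
          ((∃ a, lam a ≤ γ) ∧ (∃ a, γ ≤ lam a)) ∧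
          s = ∑ a, w a * d (μ a) (lam a)}} := by
      refine ⟨fun a => (c a)⁻¹ * S⁻¹,
        fun a => mul_nonneg (inv_pos.mpr (hc_pos a)).le (inv_pos.mpr hS_pos).le,
        by rw [← Finset.sum_mul, ← hS_def, mul_inv_cancel₀ hS_pos.ne'], ?_⟩
      rw [key _ (fun a => mul_nonneg (inv_pos.mpr (hc_pos a)).le (inv_pos.mpr hS_pos).le)]
      exact hval.symm
    have hbddA : BddAbove {v : ℝ | ∃ w : Fin K → ℝ, (∀ a, 0 ≤ w a) ∧ (∑ a, w a) = 1 ∧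
        v = sInf {s : ℝ | ∃ lam : Fin K → ℝ,
          ((∃ a, lam a ≤ γ) ∧ (∃ a, γ ≤ lam a)) ∧
          s = ∑ a, w a * d (μ a) (lam a)}} := by
      refine ⟨S⁻¹, ?_⟩
      rintro v ⟨w, hw, hw1, rfl⟩
      rw [key w hw]
      exact upper w hw hw1
    exact le_csSup hbddA hmem2
end

section
/- Let d : ℝ × ℝ → ℝ be a divergence function satisfying properties (i)–(iii). Let K ≥ 1, let μ ∈ ℝ^K, and let γ ∈ ℝ satisfy γ < min_a μ_a or γ > max_a μ_a (so μ is γ-infeasible). Define w* ∈ Δ_K by w*_a = d(μ_a,γ)^{-1} / ( Σ_{i=1}^K d(μ_i,γ)^{-1} ) for every a. Then inf_{λ ∈ Alt(μ)} Σ_{a=1}^K w*_a · d(μ_a, λ_a) = ( Σ_{a=1}^K d(μ_a,γ)^{-1} )^{-1}, so w* attains the sup-inf value sup_{w ∈ Δ_K} inf_{λ ∈ Alt(μ)} Σ_a w_a d(μ_a,λ_a). (Theorem 1, infeasible case: oracle weights.) -/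
/-- Theorem 1 (infeasible case, oracle weights): the weight vector allocating to each
arm a fraction inversely proportional to `d(μ_a,γ)` attains the sup-inf value of the
pure exploration game when `γ` lies outside the convex hull of the means. -/
theorem chm_infeasible_oracle_weights
    {K : ℕ} (hK : 1 ≤ K) (d : ℝ → ℝ → ℝ)
    (hd_nonneg : ∀ x y, 0 ≤ d x y)
    (hd_eq_zero : ∀ x y, d x y = 0 ↔ x = y)
    (hd_cont : ∀ x, Continuous fun y => d x y)
    (hd_mono_right_above : ∀ x l l', x ≤ l → l ≤ l' → d x l ≤ d x l')
    (hd_mono_right_below : ∀ x l l', l' ≤ l → l ≤ x → d x l ≤ d x l')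
    (μ : Fin K → ℝ) (γ : ℝ)
    (hinfeas : (∀ a, γ < μ a) ∨ (∀ a, μ a < γ))
    (wstar : Fin K → ℝ)
    (hwstar : wstar = fun a => (d (μ a) γ)⁻¹ / ∑ i, (d (μ i) γ)⁻¹) :
    sInf {s : ℝ | ∃ lam : Fin K → ℝ,
        ((∃ a, lam a ≤ γ) ∧ (∃ a, γ ≤ lam a)) ∧
        s = ∑ a, wstar a * d (μ a) (lam a)} =
      (∑ a, (d (μ a) γ)⁻¹)⁻¹ ∧
    sInf {s : ℝ | ∃ lam : Fin K → ℝ,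
        ((∃ a, lam a ≤ γ) ∧ (∃ a, γ ≤ lam a)) ∧
        s = ∑ a, wstar a * d (μ a) (lam a)} =
      sSup {v : ℝ | ∃ w : Fin K → ℝ, (∀ a, 0 ≤ w a) ∧ (∑ a, w a) = 1 ∧
        v = sInf {s : ℝ | ∃ lam : Fin K → ℝ,
          ((∃ a, lam a ≤ γ) ∧ (∃ a, γ ≤ lam a)) ∧
          s = ∑ a, w a * d (μ a) (lam a)}} := by
  have hne : Nonempty (Fin K) := ⟨⟨0, hK⟩⟩
  set S := ∑ i, (d (μ i) γ)⁻¹ with hS_def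
  have hdpos : ∀ a, 0 < d (μ a) γ := by
    intro a
    rcases (hd_nonneg (μ a) γ).lt_or_eq with h | h
    · exact h
    · exfalso
      have heq : μ a = γ := (hd_eq_zero (μ a) γ).mp h.symm
      rcases hinfeas with h' | h'
      · exact (h' a).ne' heq
      · exact (h' a).ne heq
  have hSpos : 0 < S :=
    Finset.sum_pos (fun i _ => inv_pos.mpr (hdpos i)) Finset.univ_nonempty
  have hmem : ∀ (w : Fin K → ℝ) (b : Fin K),
      (w b * d (μ b) γ) ∈ {s : ℝ | ∃ lam : Fin K → ℝ,
        ((∃ a, lam a ≤ γ) ∧ (∃ a, γ ≤ lam a)) ∧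
        s = ∑ a, w a * d (μ a) (lam a)} := by
    intro w b
    refine ⟨Function.update μ b γ, ⟨⟨b, by simp⟩, ⟨b, by simp⟩⟩, ?_⟩
    rw [Finset.sum_eq_single b]
    · rw [Function.update_self]
    · intro a _ hab
      rw [Function.update_of_ne hab, (hd_eq_zero _ _).mpr rfl, mul_zero]
    · intro h; exact absurd (Finset.mem_univ b) h
  have hbdd : ∀ (w : Fin K → ℝ), (∀ a, 0 ≤ w a) →
      BddBelow {s : ℝ | ∃ lam : Fin K → ℝ,
        ((∃ a, lam a ≤ γ) ∧ (∃ a, γ ≤ lam a)) ∧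
        s = ∑ a, w a * d (μ a) (lam a)} := by
    intro w hw
    refine ⟨0, ?_⟩
    rintro s ⟨lam, _, rfl⟩
    exact Finset.sum_nonneg fun a _ => mul_nonneg (hw a) (hd_nonneg _ _)
  have hwpos : ∀ a, 0 ≤ wstar a := by
    intro a
    rw [hwstar]
    exact div_nonneg (inv_nonneg.mpr (hd_nonneg _ _)) hSpos.le
  have hwsum : ∑ a, wstar a = 1 := by
    rw [hwstar, ← Finset.sum_div]
    exact div_self hSpos.ne'
  have hval : ∀ b, wstar b * d (μ b) γ = S⁻¹ := by
    intro b
    rw [hwstar]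
    field_simp
    rw [div_self (hdpos b).ne']
  have hVle : ∀ s ∈ {s : ℝ | ∃ lam : Fin K → ℝ,
      ((∃ a, lam a ≤ γ) ∧ (∃ a, γ ≤ lam a)) ∧
      s = ∑ a, wstar a * d (μ a) (lam a)}, S⁻¹ ≤ s := by
    rintro s ⟨lam, ⟨h1, h2⟩, rfl⟩
    rcases hinfeas with hlt | hlt
    · obtain ⟨b, hb⟩ := h1
      calc S⁻¹ = wstar b * d (μ b) γ := (hval b).symm
        _ ≤ wstar b * d (μ b) (lam b) :=
            mul_le_mul_of_nonneg_left
              (hd_mono_right_below (μ b) γ (lam b) hb (hlt b).le) (hwpos b)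
        _ ≤ ∑ a, wstar a * d (μ a) (lam a) :=
            Finset.single_le_sum
              (fun a _ => mul_nonneg (hwpos a) (hd_nonneg _ _)) (Finset.mem_univ b)
    · obtain ⟨b, hb⟩ := h2
      calc S⁻¹ = wstar b * d (μ b) γ := (hval b).symm
        _ ≤ wstar b * d (μ b) (lam b) :=
            mul_le_mul_of_nonneg_left
              (hd_mono_right_above (μ b) γ (lam b) (hlt b).le hb) (hwpos b)
        _ ≤ ∑ a, wstar a * d (μ a) (lam a) :=
            Finset.single_le_sum
              (fun a _ => mul_nonneg (hwpos a) (hd_nonneg _ _)) (Finset.mem_univ b)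
  have b0 : Fin K := ⟨0, hK⟩
  have hVmem : S⁻¹ ∈ {s : ℝ | ∃ lam : Fin K → ℝ,
      ((∃ a, lam a ≤ γ) ∧ (∃ a, γ ≤ lam a)) ∧
      s = ∑ a, wstar a * d (μ a) (lam a)} := by
    have := hmem wstar b0
    rwa [hval b0] at this
  have hInf : sInf {s : ℝ | ∃ lam : Fin K → ℝ,
      ((∃ a, lam a ≤ γ) ∧ (∃ a, γ ≤ lam a)) ∧
      s = ∑ a, wstar a * d (μ a) (lam a)} = S⁻¹ :=
    le_antisymm (csInf_le (hbdd wstar hwpos) hVmem) (le_csInf ⟨_, hVmem⟩ hVle)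
  have hVmemB : S⁻¹ ∈ {v : ℝ | ∃ w : Fin K → ℝ, (∀ a, 0 ≤ w a) ∧ (∑ a, w a) = 1 ∧
      v = sInf {s : ℝ | ∃ lam : Fin K → ℝ,
        ((∃ a, lam a ≤ γ) ∧ (∃ a, γ ≤ lam a)) ∧
        s = ∑ a, w a * d (μ a) (lam a)}} :=
    ⟨wstar, hwpos, hwsum, hInf.symm⟩
  have hub : ∀ v ∈ {v : ℝ | ∃ w : Fin K → ℝ, (∀ a, 0 ≤ w a) ∧ (∑ a, w a) = 1 ∧
      v = sInf {s : ℝ | ∃ lam : Fin K → ℝ,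
        ((∃ a, lam a ≤ γ) ∧ (∃ a, γ ≤ lam a)) ∧
        s = ∑ a, w a * d (μ a) (lam a)}}, v ≤ S⁻¹ := by
    rintro v ⟨w, hw0, hw1, rfl⟩
    have hexists : ∃ b, w b * d (μ b) γ ≤ S⁻¹ := by
      by_contra h
      push_neg at h
      have key : ∀ b ∈ Finset.univ, S⁻¹ * (d (μ b) γ)⁻¹ < w b := by
        intro b _
        have h2 := (div_lt_iff₀ (hdpos b)).mpr (h b)
        rwa [div_eq_mul_inv] at h2
      have hsum := Finset.sum_lt_sum_of_nonempty Finset.univ_nonempty key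
      rw [← Finset.mul_sum, ← hS_def, inv_mul_cancel₀ hSpos.ne', hw1] at hsum
      exact lt_irrefl 1 hsum
    obtain ⟨b, hb⟩ := hexists
    exact le_trans (csInf_le (hbdd w hw0) (hmem w b)) hb
  have hSup : sSup {v : ℝ | ∃ w : Fin K → ℝ, (∀ a, 0 ≤ w a) ∧ (∑ a, w a) = 1 ∧
      v = sInf {s : ℝ | ∃ lam : Fin K → ℝ,
        ((∃ a, lam a ≤ γ) ∧ (∃ a, γ ≤ lam a)) ∧
        s = ∑ a, w a * d (μ a) (lam a)}} = S⁻¹ :=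
    le_antisymm (csSup_le ⟨_, hVmemB⟩ hub) (le_csSup ⟨S⁻¹, hub⟩ hVmemB)
  exact ⟨hInf, hInf.trans hSup.symm⟩
end

section
/- Let d : ℝ × ℝ → ℝ be a divergence function satisfying properties (i)–(iii). Let K ≥ 1, let γ⁻ < γ⁺ be real thresholds, and let μ ∈ ℝ^K satisfy min_a μ_a > γ⁺ (so μ is interval-infeasible). Then sup_{w ∈ Δ_K} inf_{λ ∈ Alt(μ)} Σ_{a=1}^K w_a · d(μ_a, λ_a) = ( Σ_{a=1}^K d(μ_a,γ⁺)^{-1} )^{-1}, and this value is attained at the weights w*_a = d(μ_a,γ⁺)^{-1} / ( Σ_{i=1}^K d(μ_i,γ⁺)^{-1} ); equivalently, the characteristic time T*(μ) equals Σ_{a=1}^K 1/d(μ_a,γ⁺). (Theorem 3, infeasible case, with γ* = γ⁺.) -/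
/-- Theorem 3 (infeasible case, with `γ* = γ⁺`): when all means lie above `γ⁺`, the
sup-inf value of the interval CHM exploration game is `(Σ_a d(μ_a,γ⁺)⁻¹)⁻¹`, attained
at the weights proportional to `d(μ_a,γ⁺)⁻¹`. -/
theorem interval_chm_infeasible_characteristic_time
    {K : ℕ} (hK : 1 ≤ K) (d : ℝ → ℝ → ℝ)
    (hd_nonneg : ∀ x y, 0 ≤ d x y)
    (hd_eq_zero : ∀ x y, d x y = 0 ↔ x = y)
    (hd_cont : ∀ x, Continuous fun y => d x y)
    (hd_mono_right_above : ∀ x l l', x ≤ l → l ≤ l' → d x l ≤ d x l')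
    (hd_mono_right_below : ∀ x l l', l' ≤ l → l ≤ x → d x l ≤ d x l')
    (μ : Fin K → ℝ) (γm γp : ℝ) (hγ : γm < γp)
    (hinfeas : ∀ a, γp < μ a)
    (wstar : Fin K → ℝ)
    (hwstar : wstar = fun a => (d (μ a) γp)⁻¹ / ∑ i, (d (μ i) γp)⁻¹) :
    sSup {v : ℝ | ∃ w : Fin K → ℝ, (∀ a, 0 ≤ w a) ∧ (∑ a, w a) = 1 ∧
        v = sInf {s : ℝ | ∃ lam : Fin K → ℝ,
          ((∃ a, lam a < γp) ∧ (∃ a, γm < lam a)) ∧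
          s = ∑ a, w a * d (μ a) (lam a)}} =
      (∑ a, (d (μ a) γp)⁻¹)⁻¹ ∧
    sInf {s : ℝ | ∃ lam : Fin K → ℝ,
        ((∃ a, lam a < γp) ∧ (∃ a, γm < lam a)) ∧
        s = ∑ a, wstar a * d (μ a) (lam a)} =
      (∑ a, (d (μ a) γp)⁻¹)⁻¹ := by
  have hKne : Nonempty (Fin K) := Fin.pos_iff_nonempty.mp hK
  have huniv : (Finset.univ : Finset (Fin K)).Nonempty := Finset.univ_nonempty
  have hDpos : ∀ a, 0 < d (μ a) γp := by
    intro a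
    rcases lt_or_eq_of_le (hd_nonneg (μ a) γp) with h | h
    · exact h
    · exact absurd ((hd_eq_zero (μ a) γp).mp h.symm) (hinfeas a).ne'
  set S : ℝ := ∑ a, (d (μ a) γp)⁻¹ with hSdef
  have hSpos : 0 < S :=
    Finset.sum_pos (fun a _ => inv_pos.mpr (hDpos a)) huniv
  -- the key computation of the inner infimum
  have key : ∀ w : Fin K → ℝ, (∀ a, 0 ≤ w a) → (∑ a, w a) = 1 →
      sInf {s : ℝ | ∃ lam : Fin K → ℝ,
          ((∃ a, lam a < γp) ∧ (∃ a, γm < lam a)) ∧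
          s = ∑ a, w a * d (μ a) (lam a)} = ⨅ a, w a * d (μ a) γp := by
    intro w hw hw1
    set A : Set ℝ := {s : ℝ | ∃ lam : Fin K → ℝ,
          ((∃ a, lam a < γp) ∧ (∃ a, γm < lam a)) ∧
          s = ∑ a, w a * d (μ a) (lam a)} with hA
    have hwle1 : ∀ a, w a ≤ 1 := by
      intro a
      calc w a ≤ ∑ i, w i := Finset.single_le_sum (fun i _ => hw i) (Finset.mem_univ a)
        _ = 1 := hw1
    -- elements of A built from a single deviating coordinate
    have hmem : ∀ (b : Fin K) (t : ℝ), γm < t → t < γp →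
        (w b * d (μ b) t) ∈ A := by
      intro b t ht1 ht2
      refine ⟨Function.update μ b t, ⟨⟨b, ?_⟩, ⟨b, ?_⟩⟩, ?_⟩
      · simp [Function.update_self, ht2]
      · simp [Function.update_self, ht1]
      · rw [Finset.sum_eq_single b]
        · simp [Function.update_self]
        · intro i _ hib
          rw [Function.update_of_ne hib]
          simp [(hd_eq_zero (μ i) (μ i)).mpr rfl]
        · intro h; exact absurd (Finset.mem_univ b) h
    have hAne : A.Nonempty := by
      refine ⟨_, hmem ⟨0, hK⟩ ((γm + γp) / 2) (by linarith) (by linarith)⟩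
    have hAbdd : BddBelow A := by
      refine ⟨0, ?_⟩
      rintro s ⟨lam, _, rfl⟩
      exact Finset.sum_nonneg fun a _ =>
        mul_nonneg (hw a) (hd_nonneg (μ a) (lam a))
    have hrangebdd : BddBelow (Set.range fun a => w a * d (μ a) γp) :=
      (Set.finite_range _).bddBelow
    apply le_antisymm
    · -- sInf A ≤ each w a * d (μ a) γp
      apply le_ciInf
      intro b
      have hb : ∀ ε : ℝ, 0 < ε → sInf A ≤ w b * d (μ b) γp + ε := by
        intro ε hε
        have hc : ContinuousAt (fun y => d (μ b) y) γp := (hd_cont (μ b)).continuousAt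
        obtain ⟨δ, hδ, hδ2⟩ := Metric.continuousAt_iff.mp hc ε hε
        set t : ℝ := max ((γm + γp) / 2) (γp - δ / 2) with htdef
        have ht1 : γm < t := lt_max_of_lt_left (by linarith)
        have ht2 : t < γp := max_lt (by linarith) (by linarith)
        have htδ : dist t γp < δ := by
          rw [Real.dist_eq, abs_of_nonpos (by linarith)]
          have : γp - δ / 2 ≤ t := le_max_right _ _
          linarith
        have hdt : d (μ b) t < d (μ b) γp + ε := by
          have := hδ2 htδ
          rw [Real.dist_eq] at this
          have := abs_lt.mp this
          linarith [this.1, this.2]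
        calc sInf A ≤ w b * d (μ b) t := csInf_le hAbdd (hmem b t ht1 ht2)
          _ ≤ w b * (d (μ b) γp + ε) :=
            mul_le_mul_of_nonneg_left hdt.le (hw b)
          _ = w b * d (μ b) γp + w b * ε := by ring
          _ ≤ w b * d (μ b) γp + ε := by
            have : w b * ε ≤ 1 * ε := mul_le_mul_of_nonneg_right (hwle1 b) hε.le
            linarith
      exact le_of_forall_pos_le_add hb
    · -- each element of A is ≥ the min
      apply le_csInf hAne
      rintro s ⟨lam, ⟨⟨b, hb⟩, _⟩, rfl⟩
      have h1 : (⨅ a, w a * d (μ a) γp) ≤ w b * d (μ b) γp :=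
        ciInf_le hrangebdd b
      have h2 : d (μ b) γp ≤ d (μ b) (lam b) :=
        hd_mono_right_below (μ b) γp (lam b) hb.le (hinfeas b).le
      have h3 : w b * d (μ b) (lam b) ≤ ∑ a, w a * d (μ a) (lam a) :=
        Finset.single_le_sum
          (fun a _ => mul_nonneg (hw a) (hd_nonneg (μ a) (lam a)))
          (Finset.mem_univ b)
      calc (⨅ a, w a * d (μ a) γp) ≤ w b * d (μ b) γp := h1
        _ ≤ w b * d (μ b) (lam b) := mul_le_mul_of_nonneg_left h2 (hw b)
        _ ≤ _ := h3
  -- wstar is in the simplex and its value is S⁻¹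
  have hws_nonneg : ∀ a, 0 ≤ wstar a := by
    intro a; rw [hwstar]
    exact div_nonneg (inv_nonneg.mpr (hDpos a).le) hSpos.le
  have hws_sum : (∑ a, wstar a) = 1 := by
    rw [hwstar]
    rw [← Finset.sum_div, ← hSdef, div_self hSpos.ne']
  have hws_val : (⨅ a, wstar a * d (μ a) γp) = S⁻¹ := by
    have : ∀ a, wstar a * d (μ a) γp = S⁻¹ := by
      intro a; rw [hwstar]
      field_simp
      exact div_self (hDpos a).ne'
    simp only [this]
    exact ciInf_const
  have hws_inf : sInf {s : ℝ | ∃ lam : Fin K → ℝ,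
        ((∃ a, lam a < γp) ∧ (∃ a, γm < lam a)) ∧
        s = ∑ a, wstar a * d (μ a) (lam a)} = S⁻¹ := by
    rw [key wstar hws_nonneg hws_sum, hws_val]
  refine ⟨?_, hws_inf⟩
  -- the sup part
  set B : Set ℝ := {v : ℝ | ∃ w : Fin K → ℝ, (∀ a, 0 ≤ w a) ∧ (∑ a, w a) = 1 ∧
        v = sInf {s : ℝ | ∃ lam : Fin K → ℝ,
          ((∃ a, lam a < γp) ∧ (∃ a, γm < lam a)) ∧
          s = ∑ a, w a * d (μ a) (lam a)}} with hB
  have hub : ∀ v ∈ B, v ≤ S⁻¹ := by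
    rintro v ⟨w, hw, hw1, rfl⟩
    rw [key w hw hw1]
    by_contra hcon
    push_neg at hcon
    have hall : ∀ a, S⁻¹ / d (μ a) γp < w a := by
      intro a
      have h1 : (⨅ a, w a * d (μ a) γp) ≤ w a * d (μ a) γp :=
        ciInf_le (Set.finite_range _).bddBelow a
      have : S⁻¹ < w a * d (μ a) γp := lt_of_lt_of_le hcon h1
      exact (div_lt_iff₀ (hDpos a)).mpr this
    have hsum : (∑ a, S⁻¹ / d (μ a) γp) < ∑ a, w a :=
      Finset.sum_lt_sum_of_nonempty huniv (fun a _ => hall a)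
    have heq : (∑ a, S⁻¹ / d (μ a) γp) = 1 := by
      simp only [div_eq_mul_inv, ← Finset.mul_sum, ← hSdef]
      exact inv_mul_cancel₀ hSpos.ne'
    rw [heq, hw1] at hsum
    exact lt_irrefl 1 hsum
  have hmemB : S⁻¹ ∈ B := ⟨wstar, hws_nonneg, hws_sum, hws_inf.symm⟩
  exact le_antisymm (csSup_le ⟨S⁻¹, hmemB⟩ hub)
    (le_csSup ⟨S⁻¹, hub⟩ hmemB)
end

section
/- Let d : ℝ × ℝ → ℝ be a divergence function satisfying properties (i)–(iii). Let K ≥ 2, let μ ∈ ℝ^K and γ ∈ ℝ be such that some μ_a < γ and some μ_a > γ (and μ_a ≠ γ for all a), and let w ∈ Δ_K. Then the infimum of Σ_{a=1}^K w_a · d(μ_a, λ_a) over all λ ∈ ℝ^K such that either max_a λ_a < γ or min_a λ_a > γ equals min( Σ_{a : μ_a < γ} w_a · d(μ_a, γ), Σ_{a : μ_a > γ} w_a · d(μ_a, γ) ). (Inner infimum computation in the proof of Theorem 1, feasible case.) -/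
/-- Inner infimum computation in the proof of Theorem 1 (feasible case): for a fixed
weight vector `w` in the simplex, the infimum of `Σ_a w_a d(μ_a, λ_a)` over alternatives
`λ` with `max λ < γ` or `min λ > γ` equals the minimum of the two one-sided sums. -/
theorem chm_feasible_inner_infimum
    {K : ℕ} (hK : 2 ≤ K) (d : ℝ → ℝ → ℝ)
    (hd_nonneg : ∀ x y, 0 ≤ d x y)
    (hd_eq_zero : ∀ x y, d x y = 0 ↔ x = y)
    (hd_cont : ∀ x, Continuous fun y => d x y)
    (hd_mono_right_above : ∀ x l l', x ≤ l → l ≤ l' → d x l ≤ d x l')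
    (hd_mono_right_below : ∀ x l l', l' ≤ l → l ≤ x → d x l ≤ d x l')
    (μ : Fin K → ℝ) (γ : ℝ)
    (hbelow : ∃ a, μ a < γ) (habove : ∃ a, γ < μ a) (hne : ∀ a, μ a ≠ γ)
    (w : Fin K → ℝ) (hw_nonneg : ∀ a, 0 ≤ w a) (hw_sum : ∑ a, w a = 1) :
    sInf {s : ℝ | ∃ lam : Fin K → ℝ,
        ((∀ a, lam a < γ) ∨ (∀ a, γ < lam a)) ∧
        s = ∑ a, w a * d (μ a) (lam a)} =
      min (∑ a ∈ Finset.univ.filter (fun a => μ a < γ), w a * d (μ a) γ)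
          (∑ a ∈ Finset.univ.filter (fun a => γ < μ a), w a * d (μ a) γ) := by
  classical
  set S : Set ℝ := {s : ℝ | ∃ lam : Fin K → ℝ,
      ((∀ a, lam a < γ) ∨ (∀ a, γ < lam a)) ∧
      s = ∑ a, w a * d (μ a) (lam a)} with hSdef
  set B : ℝ := ∑ a ∈ Finset.univ.filter (fun a => μ a < γ), w a * d (μ a) γ with hBdef
  set A : ℝ := ∑ a ∈ Finset.univ.filter (fun a => γ < μ a), w a * d (μ a) γ with hAdef
  have htri : ∀ a, ¬ μ a < γ → γ < μ a := fun a h =>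
    lt_of_le_of_ne (not_lt.mp h) (hne a).symm
  have htri' : ∀ a, ¬ γ < μ a → μ a < γ := fun a h =>
    lt_of_le_of_ne (not_lt.mp h) (hne a)
  -- bounded below
  have hbdd : BddBelow S := by
    refine ⟨0, fun s hs => ?_⟩
    obtain ⟨lam, _, rfl⟩ := hs
    exact Finset.sum_nonneg fun a _ => mul_nonneg (hw_nonneg a) (hd_nonneg _ _)
  -- the two approximating families
  have gA_cont : Continuous fun t : ℝ =>
      ∑ a, w a * d (μ a) (if μ a < γ then μ a else γ - t) := by
    apply continuous_finset_sum
    intro a _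
    by_cases h : μ a < γ
    · simp only [h, if_true]; exact continuous_const
    · simp only [h, if_false]
      exact continuous_const.mul ((hd_cont (μ a)).comp (by continuity))
  have gB_cont : Continuous fun t : ℝ =>
      ∑ a, w a * d (μ a) (if γ < μ a then μ a else γ + t) := by
    apply continuous_finset_sum
    intro a _
    by_cases h : γ < μ a
    · simp only [h, if_true]; exact continuous_const
    · simp only [h, if_false]
      exact continuous_const.mul ((hd_cont (μ a)).comp (by continuity))
  have gA_zero : (∑ a, w a * d (μ a) (if μ a < γ then μ a else γ - (0:ℝ))) = A := by
    rw [hAdef, Finset.sum_filter]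
    refine Finset.sum_congr rfl fun a _ => ?_
    by_cases h : μ a < γ
    · simp [h, not_lt.mpr h.le, (hd_eq_zero (μ a) (μ a)).mpr rfl]
    · simp [h, htri a h]
  have gB_zero : (∑ a, w a * d (μ a) (if γ < μ a then μ a else γ + (0:ℝ))) = B := by
    rw [hBdef, Finset.sum_filter]
    refine Finset.sum_congr rfl fun a _ => ?_
    by_cases h : γ < μ a
    · simp [h, not_lt.mpr h.le, (hd_eq_zero (μ a) (μ a)).mpr rfl]
    · simp [h, htri' a h]
  have gA_mem : ∀ t : ℝ, 0 < t →
      (∑ a, w a * d (μ a) (if μ a < γ then μ a else γ - t)) ∈ S := by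
    intro t ht
    refine ⟨fun a => if μ a < γ then μ a else γ - t, Or.inl fun a => ?_, rfl⟩
    by_cases h : μ a < γ <;> simp [h] <;> linarith
  have gB_mem : ∀ t : ℝ, 0 < t →
      (∑ a, w a * d (μ a) (if γ < μ a then μ a else γ + t)) ∈ S := by
    intro t ht
    refine ⟨fun a => if γ < μ a then μ a else γ + t, Or.inr fun a => ?_, rfl⟩
    by_cases h : γ < μ a <;> simp [h] <;> linarith
  have hne' : S.Nonempty := ⟨_, gA_mem 1 one_pos⟩
  -- sInf S ≤ A
  have hInf_le_A : sInf S ≤ A := by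
    have hseq : Filter.Tendsto
        (fun n : ℕ => ∑ a, w a * d (μ a) (if μ a < γ then μ a else γ - (1 / (n + 1))))
        Filter.atTop (nhds A) := by
      rw [← gA_zero]
      exact (gA_cont.tendsto 0).comp tendsto_one_div_add_atTop_nhds_zero_nat
    refine ge_of_tendsto' hseq fun n => ?_
    exact csInf_le hbdd (gA_mem _ (by positivity))
  have hInf_le_B : sInf S ≤ B := by
    have hseq : Filter.Tendsto
        (fun n : ℕ => ∑ a, w a * d (μ a) (if γ < μ a then μ a else γ + (1 / (n + 1))))
        Filter.atTop (nhds B) := by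
      rw [← gB_zero]
      exact (gB_cont.tendsto 0).comp tendsto_one_div_add_atTop_nhds_zero_nat
    refine ge_of_tendsto' hseq fun n => ?_
    exact csInf_le hbdd (gB_mem _ (by positivity))
  -- lower bound
  have hlb : ∀ s ∈ S, min B A ≤ s := by
    rintro s ⟨lam, hcase | hcase, rfl⟩
    · -- all lam a < γ : bound by A
      refine le_trans (min_le_right _ _) ?_
      rw [hAdef, Finset.sum_filter]
      refine Finset.sum_le_sum fun a _ => ?_
      by_cases h : γ < μ a
      · simp only [h, if_true]
        exact mul_le_mul_of_nonneg_left
          (hd_mono_right_below (μ a) γ (lam a) (hcase a).le h.le) (hw_nonneg a)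
      · simp only [h, if_false]
        exact mul_nonneg (hw_nonneg a) (hd_nonneg _ _)
    · -- all lam a > γ : bound by B
      refine le_trans (min_le_left _ _) ?_
      rw [hBdef, Finset.sum_filter]
      refine Finset.sum_le_sum fun a _ => ?_
      by_cases h : μ a < γ
      · simp only [h, if_true]
        exact mul_le_mul_of_nonneg_left
          (hd_mono_right_above (μ a) γ (lam a) h.le (hcase a).le) (hw_nonneg a)
      · simp only [h, if_false]
        exact mul_nonneg (hw_nonneg a) (hd_nonneg _ _)
  exact le_antisymm (le_min hInf_le_B hInf_le_A) (le_csInf hne' hlb)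
end

section
/- Let d : ℝ × ℝ → ℝ be a divergence function satisfying properties (i)–(iii). Let K ≥ 1, let μ ∈ ℝ^K and γ ∈ ℝ be such that γ < min_a μ_a or γ > max_a μ_a, and let w ∈ Δ_K. Then the infimum of Σ_{a=1}^K w_a · d(μ_a, λ_a) over all λ ∈ ℝ^K such that min_a λ_a ≤ γ ≤ max_a λ_a equals min_{1 ≤ a ≤ K} w_a · d(μ_a, γ), and this infimum is attained. (Inner infimum computation in the proof of Theorem 1, infeasible case.) -/
/-- Inner infimum computation in the proof of Theorem 1 (infeasible case): for a fixed
weight vector `w` in the simplex, the infimum of `Σ_a w_a d(μ_a, λ_a)` over alternatives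
`λ` with `min λ ≤ γ ≤ max λ` equals `min_a w_a d(μ_a, γ)`, and it is attained. -/
theorem chm_infeasible_inner_infimum
    {K : ℕ} (hK : 1 ≤ K) (d : ℝ → ℝ → ℝ)
    (hd_nonneg : ∀ x y, 0 ≤ d x y)
    (hd_eq_zero : ∀ x y, d x y = 0 ↔ x = y)
    (hd_cont : ∀ x, Continuous fun y => d x y)
    (hd_mono_right_above : ∀ x l l', x ≤ l → l ≤ l' → d x l ≤ d x l')
    (hd_mono_right_below : ∀ x l l', l' ≤ l → l ≤ x → d x l ≤ d x l')
    (μ : Fin K → ℝ) (γ : ℝ)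
    (hinfeas : (∀ a, γ < μ a) ∨ (∀ a, μ a < γ))
    (w : Fin K → ℝ) (hw_nonneg : ∀ a, 0 ≤ w a) (hw_sum : ∑ a, w a = 1)
    (S : Set ℝ)
    (hS : S = {s : ℝ | ∃ lam : Fin K → ℝ,
        ((∃ a, lam a ≤ γ) ∧ (∃ a, γ ≤ lam a)) ∧
        s = ∑ a, w a * d (μ a) (lam a)}) :
    sInf S = sInf (Set.range fun a => w a * d (μ a) γ) ∧ sInf S ∈ S := by
  
  haveI hne : Nonempty (Fin K) := Fin.pos_iff_nonempty.mp hK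
  set f : Fin K → ℝ := fun a => w a * d (μ a) γ with hf
  -- range f ⊆ S
  have hsub : Set.range f ⊆ S := by
    rintro _ ⟨a, rfl⟩
    rw [hS]
    refine ⟨Function.update μ a γ, ⟨⟨a, ?_⟩, ⟨a, ?_⟩⟩, ?_⟩
    · simp
    · simp
    · rw [Finset.sum_eq_single a]
      · simp [f]
      · intro b _ hb
        rw [Function.update_of_ne hb]
        simp [(hd_eq_zero (μ b) (μ b)).mpr rfl]
      · simp
  have hSne : S.Nonempty := ⟨f (Classical.arbitrary _), hsub ⟨_, rfl⟩⟩
  have hrne : (Set.range f).Nonempty := Set.range_nonempty f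
  have hrfin : (Set.range f).Finite := Set.finite_range f
  have hrbdd : BddBelow (Set.range f) := hrfin.bddBelow
  -- every element of S is ≥ sInf (range f)
  have hlb : ∀ s ∈ S, sInf (Set.range f) ≤ s := by
    intro s hs
    rw [hS] at hs
    obtain ⟨lam, ⟨⟨a, ha⟩, ⟨b, hb⟩⟩, rfl⟩ := hs
    have key : ∃ c, w c * d (μ c) γ ≤ w c * d (μ c) (lam c) := by
      rcases hinfeas with h | h
      · exact ⟨a, mul_le_mul_of_nonneg_left
          (hd_mono_right_below (μ a) γ (lam a) ha (h a).le) (hw_nonneg a)⟩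
      · exact ⟨b, mul_le_mul_of_nonneg_left
          (hd_mono_right_above (μ b) γ (lam b) (h b).le hb) (hw_nonneg b)⟩
    obtain ⟨c, hc⟩ := key
    calc sInf (Set.range f) ≤ f c := csInf_le hrbdd ⟨c, rfl⟩
      _ ≤ w c * d (μ c) (lam c) := hc
      _ ≤ ∑ a, w a * d (μ a) (lam a) := by
          refine Finset.single_le_sum (f := fun i => w i * d (μ i) (lam i)) (fun i _ => ?_) (Finset.mem_univ c)
          exact mul_nonneg (hw_nonneg i) (hd_nonneg _ _)
  have hmem : sInf (Set.range f) ∈ Set.range f := hrne.csInf_mem hrfin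
  have hSbdd : BddBelow S := ⟨sInf (Set.range f), fun s hs => hlb s hs⟩
  have heq : sInf S = sInf (Set.range f) :=
    le_antisymm (csInf_le hSbdd (hsub hmem)) (le_csInf hSne hlb)
  exact ⟨heq, heq ▸ hsub hmem⟩
end

section
/- Let d : ℝ × ℝ → ℝ be a divergence function satisfying properties (i)–(iii). Let K ≥ 2, let γ⁻ < γ⁺ be real thresholds, let μ ∈ ℝ^K satisfy min_a μ_a < γ⁺, max_a μ_a > γ⁻, and μ_a ∉ {γ⁻,γ⁺} for all a, and let w ∈ Δ_K. Then the infimum of Σ_{a=1}^K w_a · d(μ_a, λ_a) over all λ ∈ ℝ^K such that either max_a λ_a ≤ γ⁻ or min_a λ_a ≥ γ⁺ equals min( Σ_{a : μ_a > γ⁻} w_a · d(μ_a, γ⁻), Σ_{a : μ_a < γ⁺} w_a · d(μ_a, γ⁺) ). (Inner infimum computation in the proof of Theorem 3, feasible case.) -/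
/-- Inner infimum computation in the proof of Theorem 3 (feasible case): for a fixed
weight vector `w` in the simplex, the infimum of `Σ_a w_a d(μ_a, λ_a)` over alternatives
`λ` with `max λ ≤ γ⁻` or `min λ ≥ γ⁺` equals the minimum of the two one-sided sums. -/
theorem interval_chm_feasible_inner_infimum
    {K : ℕ} (hK : 2 ≤ K) (d : ℝ → ℝ → ℝ)
    (hd_nonneg : ∀ x y, 0 ≤ d x y)
    (hd_eq_zero : ∀ x y, d x y = 0 ↔ x = y)
    (hd_cont : ∀ x, Continuous fun y => d x y)
    (hd_mono_right_above : ∀ x l l', x ≤ l → l ≤ l' → d x l ≤ d x l')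
    (hd_mono_right_below : ∀ x l l', l' ≤ l → l ≤ x → d x l ≤ d x l')
    (μ : Fin K → ℝ) (γm γp : ℝ) (hγ : γm < γp)
    (hfeas₁ : ∃ a, μ a < γp) (hfeas₂ : ∃ a, γm < μ a)
    (hne : ∀ a, μ a ≠ γm ∧ μ a ≠ γp)
    (w : Fin K → ℝ) (hw_nonneg : ∀ a, 0 ≤ w a) (hw_sum : ∑ a, w a = 1) :
    sInf {s : ℝ | ∃ lam : Fin K → ℝ,
        ((∀ a, lam a ≤ γm) ∨ (∀ a, γp ≤ lam a)) ∧
        s = ∑ a, w a * d (μ a) (lam a)} =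
      min (∑ a ∈ Finset.univ.filter (fun a => γm < μ a), w a * d (μ a) γm)
          (∑ a ∈ Finset.univ.filter (fun a => μ a < γp), w a * d (μ a) γp) := by
  set S := {s : ℝ | ∃ lam : Fin K → ℝ,
        ((∀ a, lam a ≤ γm) ∨ (∀ a, γp ≤ lam a)) ∧
        s = ∑ a, w a * d (μ a) (lam a)} with hS
  have hbdd : BddBelow S := by
    refine ⟨0, ?_⟩
    rintro s ⟨lam, -, rfl⟩
    exact Finset.sum_nonneg fun a _ => mul_nonneg (hw_nonneg a) (hd_nonneg _ _)
  have hmemA : (∑ a ∈ Finset.univ.filter (fun a => γm < μ a), w a * d (μ a) γm) ∈ S := by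
    refine ⟨fun a => min (μ a) γm, Or.inl fun a => min_le_right _ _, ?_⟩
    rw [← Finset.sum_filter_add_sum_filter_not Finset.univ (fun a => γm < μ a)
      (fun a => w a * d (μ a) (min (μ a) γm))]
    have h1 : ∑ a ∈ Finset.univ.filter (fun a => γm < μ a),
        w a * d (μ a) (min (μ a) γm)
        = ∑ a ∈ Finset.univ.filter (fun a => γm < μ a), w a * d (μ a) γm := by
      refine Finset.sum_congr rfl fun a ha => ?_
      rw [min_eq_right (le_of_lt (Finset.mem_filter.mp ha).2)]
    have h2 : ∑ a ∈ Finset.univ.filter (fun a => ¬ γm < μ a),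
        w a * d (μ a) (min (μ a) γm) = 0 := by
      refine Finset.sum_eq_zero fun a ha => ?_
      rw [min_eq_left (le_of_not_gt (Finset.mem_filter.mp ha).2),
        (hd_eq_zero _ _).mpr rfl, mul_zero]
    rw [h1, h2, add_zero]
  have hmemB : (∑ a ∈ Finset.univ.filter (fun a => μ a < γp), w a * d (μ a) γp) ∈ S := by
    refine ⟨fun a => max (μ a) γp, Or.inr fun a => le_max_right _ _, ?_⟩
    rw [← Finset.sum_filter_add_sum_filter_not Finset.univ (fun a => μ a < γp)
      (fun a => w a * d (μ a) (max (μ a) γp))]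
    have h1 : ∑ a ∈ Finset.univ.filter (fun a => μ a < γp),
        w a * d (μ a) (max (μ a) γp)
        = ∑ a ∈ Finset.univ.filter (fun a => μ a < γp), w a * d (μ a) γp := by
      refine Finset.sum_congr rfl fun a ha => ?_
      rw [max_eq_right (le_of_lt (Finset.mem_filter.mp ha).2)]
    have h2 : ∑ a ∈ Finset.univ.filter (fun a => ¬ μ a < γp),
        w a * d (μ a) (max (μ a) γp) = 0 := by
      refine Finset.sum_eq_zero fun a ha => ?_
      rw [max_eq_left (le_of_not_gt (Finset.mem_filter.mp ha).2),
        (hd_eq_zero _ _).mpr rfl, mul_zero]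
    rw [h1, h2, add_zero]
  refine le_antisymm (le_min (csInf_le hbdd hmemA) (csInf_le hbdd hmemB)) ?_
  refine le_csInf ⟨_, hmemA⟩ ?_
  rintro s ⟨lam, hc | hc, rfl⟩
  · refine le_trans (min_le_left _ _) ?_
    calc ∑ a ∈ Finset.univ.filter (fun a => γm < μ a), w a * d (μ a) γm
        ≤ ∑ a ∈ Finset.univ.filter (fun a => γm < μ a), w a * d (μ a) (lam a) := by
          refine Finset.sum_le_sum fun a ha => ?_
          exact mul_le_mul_of_nonneg_left
            (hd_mono_right_below (μ a) γm (lam a) (hc a)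
              (le_of_lt (Finset.mem_filter.mp ha).2)) (hw_nonneg a)
      _ ≤ ∑ a, w a * d (μ a) (lam a) :=
          Finset.sum_le_sum_of_subset_of_nonneg (Finset.filter_subset _ _)
            (fun a _ _ => mul_nonneg (hw_nonneg a) (hd_nonneg _ _))
  · refine le_trans (min_le_right _ _) ?_
    calc ∑ a ∈ Finset.univ.filter (fun a => μ a < γp), w a * d (μ a) γp
        ≤ ∑ a ∈ Finset.univ.filter (fun a => μ a < γp), w a * d (μ a) (lam a) := by
          refine Finset.sum_le_sum fun a ha => ?_
          exact mul_le_mul_of_nonneg_left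
            (hd_mono_right_above (μ a) γp (lam a)
              (le_of_lt (Finset.mem_filter.mp ha).2) (hc a)) (hw_nonneg a)
      _ ≤ ∑ a, w a * d (μ a) (lam a) :=
          Finset.sum_le_sum_of_subset_of_nonneg (Finset.filter_subset _ _)
            (fun a _ _ => mul_nonneg (hw_nonneg a) (hd_nonneg _ _))
end

section
/- Let K ≥ 2, let d_1, …, d_K be positive real numbers, and let S⁻ and S⁺ be nonempty disjoint subsets of {1,…,K} with S⁻ ∪ S⁺ = {1,…,K}. Set D⁻ = max_{a ∈ S⁻} d_a and D⁺ = max_{a ∈ S⁺} d_a. Then sup_{w ∈ Δ_K} min( Σ_{a ∈ S⁻} w_a d_a, Σ_{a ∈ S⁺} w_a d_a ) = ( (D⁻)^{-1} + (D⁺)^{-1} )^{-1}, and the supremum is attained at the weight vector that places mass (D⁻)^{-1}/((D⁻)^{-1}+(D⁺)^{-1}) on an index a⁻ ∈ S⁻ with d_{a⁻} = D⁻, mass (D⁺)^{-1}/((D⁻)^{-1}+(D⁺)^{-1}) on an index a⁺ ∈ S⁺ with d_{a⁺} = D⁺, and mass 0 elsewhere. (Simplex allocation game solved in the proof of Theorem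 1, feasible case.) -/
/-- Simplex allocation game (feasible case of Theorem 1): for positive values `d_a` and
a partition of the arms into two nonempty groups `S⁻, S⁺` with groupwise maxima `D⁻, D⁺`,
`sup_{w ∈ Δ_K} min(Σ_{a∈S⁻} w_a d_a, Σ_{a∈S⁺} w_a d_a) = ((D⁻)⁻¹ + (D⁺)⁻¹)⁻¹`,
attained by splitting the mass between maximizing indices of the two groups. -/
theorem simplex_allocation_game_two_groups
    {K : ℕ} (hK : 2 ≤ K) (dv : Fin K → ℝ) (hdv : ∀ a, 0 < dv a)
    (Sm Sp : Finset (Fin K)) (hSm : Sm.Nonempty) (hSp : Sp.Nonempty)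
    (hdisj : Disjoint Sm Sp) (hunion : Sm ∪ Sp = Finset.univ)
    (Dm Dp : ℝ)
    (hDm_ub : ∀ a ∈ Sm, dv a ≤ Dm) (hDp_ub : ∀ a ∈ Sp, dv a ≤ Dp)
    (aminus aplus : Fin K) (haminus : aminus ∈ Sm) (haplus : aplus ∈ Sp)
    (hdm : dv aminus = Dm) (hdp : dv aplus = Dp)
    (wstar : Fin K → ℝ)
    (hwstar : wstar = fun a =>
      if a = aminus then Dm⁻¹ / (Dm⁻¹ + Dp⁻¹)
      else if a = aplus then Dp⁻¹ / (Dm⁻¹ + Dp⁻¹)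
      else 0) :
    sSup {v : ℝ | ∃ w : Fin K → ℝ, (∀ a, 0 ≤ w a) ∧ (∑ a, w a) = 1 ∧
        v = min (∑ a ∈ Sm, w a * dv a) (∑ a ∈ Sp, w a * dv a)} =
      (Dm⁻¹ + Dp⁻¹)⁻¹ ∧
    min (∑ a ∈ Sm, wstar a * dv a) (∑ a ∈ Sp, wstar a * dv a) =
      (Dm⁻¹ + Dp⁻¹)⁻¹ := by
  have hDm : 0 < Dm := hdm ▸ hdv aminus
  have hDp : 0 < Dp := hdp ▸ hdv aplus
  have hs : 0 < Dm⁻¹ + Dp⁻¹ := by positivity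
  have hne : aminus ≠ aplus := fun h => (Finset.disjoint_left.mp hdisj haminus) (h ▸ haplus)
  -- sums of wstar over Sm, Sp
  have hSmsum : ∑ a ∈ Sm, wstar a * dv a = (Dm⁻¹ + Dp⁻¹)⁻¹ := by
    rw [hwstar]
    have : ∀ a ∈ Sm, (if a = aminus then Dm⁻¹ / (Dm⁻¹ + Dp⁻¹)
        else if a = aplus then Dp⁻¹ / (Dm⁻¹ + Dp⁻¹) else 0) * dv a
        = if a = aminus then Dm⁻¹ / (Dm⁻¹ + Dp⁻¹) * dv a else 0 := by
      intro a ha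
      by_cases h : a = aminus
      · simp [h]
      · have h2 : a ≠ aplus := fun hh =>
          (Finset.disjoint_left.mp hdisj (hh ▸ ha)) haplus
        simp [h, h2]
    rw [Finset.sum_congr rfl this, Finset.sum_ite_eq' Sm aminus
      (fun a => Dm⁻¹ / (Dm⁻¹ + Dp⁻¹) * dv a), if_pos haminus, hdm]
    field_simp
  have hSpsum : ∑ a ∈ Sp, wstar a * dv a = (Dm⁻¹ + Dp⁻¹)⁻¹ := by
    rw [hwstar]
    have : ∀ a ∈ Sp, (if a = aminus then Dm⁻¹ / (Dm⁻¹ + Dp⁻¹)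
        else if a = aplus then Dp⁻¹ / (Dm⁻¹ + Dp⁻¹) else 0) * dv a
        = if a = aplus then Dp⁻¹ / (Dm⁻¹ + Dp⁻¹) * dv a else 0 := by
      intro a ha
      by_cases h : a = aplus
      · have h1 : a ≠ aminus := fun hh =>
          (Finset.disjoint_right.mp hdisj (hh ▸ ha)) haminus
        simp [h, h1, Ne.symm hne]
      · by_cases h1 : a = aminus
        · exact ((Finset.disjoint_left.mp hdisj haminus) (h1 ▸ ha)).elim
        · simp [h, h1]
    rw [Finset.sum_congr rfl this, Finset.sum_ite_eq' Sp aplus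
      (fun a => Dp⁻¹ / (Dm⁻¹ + Dp⁻¹) * dv a), if_pos haplus, hdp]
    field_simp
  have hmin : min (∑ a ∈ Sm, wstar a * dv a) (∑ a ∈ Sp, wstar a * dv a)
      = (Dm⁻¹ + Dp⁻¹)⁻¹ := by rw [hSmsum, hSpsum, min_self]
  -- wstar is in the simplex
  have hwnn : ∀ a, 0 ≤ wstar a := by
    intro a; rw [hwstar]
    dsimp only
    split_ifs <;> positivity
  have hwsum : ∑ a, wstar a = 1 := by
    rw [hwstar]
    have : ∀ a : Fin K, (if a = aminus then Dm⁻¹ / (Dm⁻¹ + Dp⁻¹)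
        else if a = aplus then Dp⁻¹ / (Dm⁻¹ + Dp⁻¹) else 0)
        = (if a = aminus then Dm⁻¹ / (Dm⁻¹ + Dp⁻¹) else 0)
        + (if a = aplus then Dp⁻¹ / (Dm⁻¹ + Dp⁻¹) else 0) := by
      intro a
      by_cases h : a = aminus
      · have : a ≠ aplus := h ▸ hne
        simp [h, this, hne]
      · by_cases h2 : a = aplus <;> simp [h, h2, Ne.symm hne]
    rw [Finset.sum_congr rfl (fun a _ => this a), Finset.sum_add_distrib,
      Finset.sum_ite_eq' Finset.univ aminus, Finset.sum_ite_eq' Finset.univ aplus]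
    simp only [Finset.mem_univ, if_pos]
    field_simp
  -- membership
  have hmem : (Dm⁻¹ + Dp⁻¹)⁻¹ ∈ {v : ℝ | ∃ w : Fin K → ℝ, (∀ a, 0 ≤ w a) ∧ (∑ a, w a) = 1 ∧
      v = min (∑ a ∈ Sm, w a * dv a) (∑ a ∈ Sp, w a * dv a)} :=
    ⟨wstar, hwnn, hwsum, hmin.symm⟩
  -- upper bound
  have hub : ∀ v ∈ {v : ℝ | ∃ w : Fin K → ℝ, (∀ a, 0 ≤ w a) ∧ (∑ a, w a) = 1 ∧
      v = min (∑ a ∈ Sm, w a * dv a) (∑ a ∈ Sp, w a * dv a)}, v ≤ (Dm⁻¹ + Dp⁻¹)⁻¹ := by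
    rintro v ⟨w, hwn, hw1, rfl⟩
    set m := ∑ a ∈ Sm, w a * dv a with hm
    set p := ∑ a ∈ Sp, w a * dv a with hp
    have htu : (∑ a ∈ Sm, w a) + (∑ a ∈ Sp, w a) = 1 := by
      rw [← Finset.sum_union hdisj, hunion]; exact hw1
    have hmle : m ≤ Dm * ∑ a ∈ Sm, w a := by
      rw [Finset.mul_sum]
      exact Finset.sum_le_sum fun a ha => by
        rw [mul_comm (Dm) (w a)]
        exact mul_le_mul_of_nonneg_left (hDm_ub a ha) (hwn a)
    have hple : p ≤ Dp * ∑ a ∈ Sp, w a := by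
      rw [Finset.mul_sum]
      exact Finset.sum_le_sum fun a ha => by
        rw [mul_comm (Dp) (w a)]
        exact mul_le_mul_of_nonneg_left (hDp_ub a ha) (hwn a)
    have h1 : min m p * Dm⁻¹ ≤ ∑ a ∈ Sm, w a := by
      calc min m p * Dm⁻¹ ≤ (Dm * ∑ a ∈ Sm, w a) * Dm⁻¹ :=
            mul_le_mul_of_nonneg_right (le_trans (min_le_left _ _) hmle) (by positivity)
        _ = ∑ a ∈ Sm, w a := by field_simp
    have h2 : min m p * Dp⁻¹ ≤ ∑ a ∈ Sp, w a := by
      calc min m p * Dp⁻¹ ≤ (Dp * ∑ a ∈ Sp, w a) * Dp⁻¹ :=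
            mul_le_mul_of_nonneg_right (le_trans (min_le_right _ _) hple) (by positivity)
        _ = ∑ a ∈ Sp, w a := by field_simp
    have h3 : min m p * (Dm⁻¹ + Dp⁻¹) ≤ 1 := by
      rw [mul_add]; linarith
    calc min m p ≤ 1 / (Dm⁻¹ + Dp⁻¹) := (le_div_iff₀ hs).mpr h3
      _ = (Dm⁻¹ + Dp⁻¹)⁻¹ := one_div _
  refine ⟨le_antisymm (Real.sSup_le hub (by positivity)) (le_csSup ⟨_, hub⟩ hmem), hmin⟩
end

section
/- Let β > 0 and η > 0 satisfy β·η ≤ e^{-1}. Then for every real x with x ≥ (1/β) · ln( e · ln(1/(βη)) / (βη) ), one has β·x ≥ ln(x/η). (Precise form of Proposition 1, the calibration inequality used to bound the stopping time in the proof of Lemma 1.) -/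
/-- Proposition 1 (calibration inequality, Lemma 22 of Kaufmann et al.): if
`β·η ≤ e⁻¹`, then every `x ≥ (1/β)·ln(e·ln(1/(βη))/(βη))` satisfies `β·x ≥ ln(x/η)`. -/
theorem calibration_inequality (β η : ℝ) (hβ : 0 < β) (hη : 0 < η)
    (h : β * η ≤ Real.exp (-1)) :
    ∀ x : ℝ, (1 / β) * Real.log (Real.exp 1 * Real.log (1 / (β * η)) / (β * η)) ≤ x →
      Real.log (x / η) ≤ β * x := by
  intro x hx
  set c := β * η with hc_def
  have hc : 0 < c := mul_pos hβ hη
  have hec : Real.exp 1 ≤ 1 / c := by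
    rw [Real.exp_neg] at h
    rw [le_div_iff₀ hc]
    calc Real.exp 1 * c ≤ Real.exp 1 * (Real.exp 1)⁻¹ :=
          mul_le_mul_of_nonneg_left h (Real.exp_pos 1).le
      _ = 1 := mul_inv_cancel₀ (Real.exp_ne_zero 1)
  have hL1 : 1 ≤ Real.log (1 / c) := by
    calc (1:ℝ) = Real.log (Real.exp 1) := (Real.log_exp 1).symm
      _ ≤ Real.log (1 / c) := Real.log_le_log (Real.exp_pos 1) hec
  set L := Real.log (1 / c) with hL_def
  have hL0 : 0 < L := lt_of_lt_of_le one_pos hL1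
  have hLc : Real.log c = -L := by
    rw [hL_def, Real.log_div one_ne_zero (ne_of_gt hc), Real.log_one]; ring
  have hlog : Real.log (Real.exp 1 * L / c) = 1 + Real.log L + L := by
    rw [Real.log_div (by positivity) (ne_of_gt hc),
      Real.log_mul (Real.exp_ne_zero 1) (ne_of_gt hL0), Real.log_exp, hLc]
    ring
  set S := 1 + Real.log L + L with hS_def
  have hlogL : 0 ≤ Real.log L := Real.log_nonneg hL1
  have hS2 : 2 ≤ S := by
    have : 1 ≤ L := hL1
    nlinarith
  have hS0 : 0 < S := by linarith
  have hx0 : S / β ≤ x := by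
    rw [hlog] at hx
    calc S / β = (1 / β) * S := by ring
      _ ≤ x := hx
  have hxpos : 0 < x := lt_of_lt_of_le (by positivity) hx0
  have hx0pos : 0 < S / β := by positivity
  -- base: log(S/β/η) ≤ S
  have hbase : Real.log (S / β / η) ≤ S := by
    have h1 : S / β / η = S / c := by
      rw [hc_def]; field_simp
    rw [h1, Real.log_div (ne_of_gt hS0) (ne_of_gt hc), hLc]
    have hSe : S ≤ Real.exp 1 * L := by
      have hlnL : Real.log L ≤ L - 1 := by
        have := Real.log_le_sub_one_of_pos hL0
        linarith
      have he2 : (2:ℝ) ≤ Real.exp 1 := by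
        have := Real.add_one_le_exp (1:ℝ); linarith
      nlinarith
    have h2 : Real.log S ≤ Real.log (Real.exp 1 * L) := Real.log_le_log hS0 hSe
    rw [Real.log_mul (Real.exp_ne_zero 1) (ne_of_gt hL0), Real.log_exp] at h2
    linarith [h2]
  -- increment: log(x / (S/β)) ≤ β * (x - S/β)
  have hinc : Real.log (x / (S / β)) ≤ β * (x - S / β) := by
    have h1 : Real.log (x / (S / β)) ≤ x / (S / β) - 1 :=
      Real.log_le_sub_one_of_pos (by positivity)
    have h2 : x / (S / β) - 1 = β * (x - S / β) / S := by
      field_simp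
    have h3 : β * (x - S / β) / S ≤ β * (x - S / β) := by
      have hnum : 0 ≤ β * (x - S / β) := by
        have : 0 ≤ x - S / β := by linarith
        positivity
      exact div_le_self hnum (by linarith)
    linarith [h1, h2, h3]
  have hsplit : Real.log (x / η) = Real.log (S / β / η) + Real.log (x / (S / β)) := by
    rw [← Real.log_mul (by positivity) (by positivity)]
    congr 1
    field_simp
  rw [hsplit]
  have : β * (S / β) = S := by field_simp
  linarith [hbase, hinc]
end

section
/- Let K ≥ 1 and let ψ : {1,2,3,…} → ℝ^K be a sequence with ψ_a(t) ≥ 0 for all a and t and Σ_{a=1}^K ψ_a(t) = 1 for every t. For each arm a and time t define the running average ψ̄_a(t) = (1/t) Σ_{s=1}^t ψ_a(s). Let w* ∈ Δ_K. If for every arm a ∈ {1,…,K} and every c > 0 the series Σ_{t=1}^∞ ψ_a(t) · 1{ψ̄_a(t) ≥ w*_a + c} converges, then for every arm a, ψ̄_a(t) → w*_a as t → ∞. (Proposition 3, the deterministic averaging lemma used to prove Theorem 2.) -/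
/-- Proposition 3 (deterministic averaging lemma used to prove Theorem 2): if for every
arm `a` and every `c > 0` the series `Σ_t ψ_a(t)·1{ψ̄_a(t) ≥ w*_a + c}` converges, then
the running averages `ψ̄_a(t)` converge to `w*_a`. -/
theorem averaging_lemma
    {K : ℕ} (hK : 1 ≤ K) (ψ : ℕ → Fin K → ℝ)
    (hψ_nonneg : ∀ t, 1 ≤ t → ∀ a, 0 ≤ ψ t a)
    (hψ_sum : ∀ t, 1 ≤ t → ∑ a, ψ t a = 1)
    (wstar : Fin K → ℝ) (hw_nonneg : ∀ a, 0 ≤ wstar a) (hw_sum : ∑ a, wstar a = 1)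
    (avg : Fin K → ℕ → ℝ)
    (havg : ∀ a t, avg a t = (∑ s ∈ Finset.Icc 1 t, ψ s a) / t)
    (hconv : ∀ a, ∀ c > (0 : ℝ), Summable fun t : ℕ =>
      if 1 ≤ t ∧ wstar a + c ≤ avg a t then ψ t a else 0) :
    ∀ a, Filter.Tendsto (fun t => avg a t) Filter.atTop (nhds (wstar a)) := by
  -- basic facts
  have hψ_le_one : ∀ t, 1 ≤ t → ∀ a, ψ t a ≤ 1 := by
    intro t ht a
    calc ψ t a ≤ ∑ b, ψ t b :=
          Finset.single_le_sum (fun b _ => hψ_nonneg t ht b) (Finset.mem_univ a)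
    _ = 1 := hψ_sum t ht
  have hS_nonneg : ∀ a t, 0 ≤ ∑ s ∈ Finset.Icc 1 t, ψ s a := fun a t =>
    Finset.sum_nonneg (fun s hs => hψ_nonneg s (Finset.mem_Icc.mp hs).1 a)
  have hS_le : ∀ a t, (∑ s ∈ Finset.Icc 1 t, ψ s a) ≤ t := by
    intro a t
    calc (∑ s ∈ Finset.Icc 1 t, ψ s a) ≤ ∑ _s ∈ Finset.Icc 1 t, (1:ℝ) :=
          Finset.sum_le_sum (fun s hs => hψ_le_one s (Finset.mem_Icc.mp hs).1 a)
    _ = t := by simp [Nat.card_Icc]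
  -- running averages sum to one
  have havg_sum : ∀ t : ℕ, 1 ≤ t → ∑ a, avg a t = 1 := by
    intro t ht
    have htne : (t:ℝ) ≠ 0 := by exact_mod_cast (Nat.pos_of_ne_zero (by omega)).ne'
    simp only [havg, ← Finset.sum_div]
    rw [Finset.sum_comm]
    rw [Finset.sum_congr rfl (fun s hs => hψ_sum s (Finset.mem_Icc.mp hs).1)]
    simp [Nat.card_Icc, htne]
  -- key eventual upper bound
  have key : ∀ a, ∀ c : ℝ, 0 < c → ∀ᶠ t in Filter.atTop, avg a t ≤ wstar a + c := by
    intro a c hc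
    have hc2 : (0:ℝ) < c/2 := by positivity
    set f : ℕ → ℝ := fun t => if 1 ≤ t ∧ wstar a + c/2 ≤ avg a t then ψ t a else 0 with hf
    obtain ⟨s0, hs0⟩ := (summable_iff_vanishing.mp (hconv a (c/2) hc2)) (Set.Iio 1)
      (Iio_mem_nhds (by norm_num))
    set T : ℕ := max (s0.sup id) 1 with hT
    have hT1 : 1 ≤ T := le_max_right _ _
    have tail : ∀ m t : ℕ, T ≤ m → ∑ s ∈ Finset.Ioc m t, f s < 1 := by
      intro m t hm
      have := hs0 (Finset.Ioc m t) (by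
        rw [Finset.disjoint_left]
        intro i hi his
        have h1 : m < i := (Finset.mem_Ioc.mp hi).1
        have h2 : i ≤ s0.sup id := Finset.le_sup (f := id) his
        have : i ≤ T := le_trans h2 (le_max_left _ _)
        omega)
      simpa using this
    -- if `s` is a "bad" time then `ψ s a = f s`
    have hfbad : ∀ s, 1 ≤ s → wstar a + c/2 ≤ avg a s → ψ s a = f s := by
      intro s h1 h2; simp [hf, h1, h2]
    have bound : ∀ t : ℕ, T < t → avg a t ≤ wstar a + c/2 + (T + 1)/t := by
      intro t ht
      have ht1 : 1 ≤ t := le_trans hT1 ht.le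
      have htpos : (0:ℝ) < t := by exact_mod_cast Nat.lt_of_lt_of_le Nat.zero_lt_one ht1
      have hwc : (0:ℝ) ≤ wstar a + c/2 := add_nonneg (hw_nonneg a) hc2.le
      -- split sum: Icc 1 t = Ioc 0 t = Ioc 0 m ∪ Ioc m t
      have hsplit : ∀ m : ℕ, m ≤ t →
          (∑ s ∈ Finset.Icc 1 t, ψ s a)
            = (∑ s ∈ Finset.Icc 1 m, ψ s a) + ∑ s ∈ Finset.Ioc m t, ψ s a := by
        intro m hm
        rw [show Finset.Icc 1 t = Finset.Ioc 0 t from by rw [← Finset.Icc_add_one_left_eq_Ioc]; rfl,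
            show Finset.Icc 1 m = Finset.Ioc 0 m from by rw [← Finset.Icc_add_one_left_eq_Ioc]; rfl,
            Finset.sum_Ioc_consecutive _ (Nat.zero_le m) hm]
      set G := (Finset.Ioc T t).filter (fun s => avg a s < wstar a + c/2) with hG
      have keyS : (∑ s ∈ Finset.Icc 1 t, ψ s a) ≤ (wstar a + c/2) * t + (T + 1) := by
        rcases Finset.eq_empty_or_nonempty G with hGe | hGne
        · -- all times in Ioc T t are bad
          have hbad : ∀ s ∈ Finset.Ioc T t, ψ s a = f s := by
            intro s hs
            obtain ⟨hs1, hs2⟩ := Finset.mem_Ioc.mp hs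
            have : ¬ avg a s < wstar a + c/2 := by
              intro hlt
              exact Finset.notMem_empty s (hGe ▸ (Finset.mem_filter.mpr ⟨hs, hlt⟩))
            exact hfbad s (le_trans hT1 hs1.le) (not_lt.mp this)
          have := hsplit T ht.le
          rw [this, Finset.sum_congr rfl hbad]
          have h1 : (∑ s ∈ Finset.Icc 1 T, ψ s a) ≤ T := hS_le a T
          have h2 : (∑ s ∈ Finset.Ioc T t, f s) < 1 := tail T t le_rfl
          nlinarith [mul_nonneg hwc htpos.le]
        · -- there is a last good time m in Ioc T t
          set m := G.max' hGne with hm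
          have hmG : m ∈ G := G.max'_mem hGne
          obtain ⟨hmIoc, hmlt⟩ := Finset.mem_filter.mp hmG
          obtain ⟨hTm, hmt⟩ := Finset.mem_Ioc.mp hmIoc
          have hm1 : 1 ≤ m := le_trans hT1 hTm.le
          have hmpos : (0:ℝ) < m := by exact_mod_cast Nat.lt_of_lt_of_le Nat.zero_lt_one hm1
          have hbad : ∀ s ∈ Finset.Ioc m t, ψ s a = f s := by
            intro s hs
            obtain ⟨hs1, hs2⟩ := Finset.mem_Ioc.mp hs
            have hsT : s ∈ Finset.Ioc T t := Finset.mem_Ioc.mpr ⟨lt_trans hTm hs1, hs2⟩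
            have : ¬ avg a s < wstar a + c/2 := by
              intro hlt
              have : s ≤ m := G.le_max' s (Finset.mem_filter.mpr ⟨hsT, hlt⟩)
              omega
            exact hfbad s (le_trans hm1 hs1.le) (not_lt.mp this)
          have hsum := hsplit m hmt
          rw [hsum, Finset.sum_congr rfl hbad]
          have h2 : (∑ s ∈ Finset.Ioc m t, f s) < 1 := tail m t hTm.le
          have hSm : (∑ s ∈ Finset.Icc 1 m, ψ s a) = avg a m * m := by
            rw [havg]; field_simp
          have hmb : avg a m * m ≤ (wstar a + c/2) * t := by
            have h3 : avg a m * m ≤ (wstar a + c/2) * m :=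
              mul_le_mul_of_nonneg_right hmlt.le hmpos.le
            have h4 : (wstar a + c/2) * m ≤ (wstar a + c/2) * t :=
              mul_le_mul_of_nonneg_left (by exact_mod_cast hmt) hwc
            linarith
          rw [hSm]
          have hT0 : (0:ℝ) ≤ T := by positivity
          linarith
      rw [havg, div_le_iff₀ htpos]
      calc (∑ s ∈ Finset.Icc 1 t, ψ s a) ≤ (wstar a + c/2) * t + (T + 1) := keyS
      _ = (wstar a + c/2) * t + ((T + 1)/t) * t := by field_simp
      _ = (wstar a + c/2 + (T + 1)/t) * t := by ring
    -- (T+1)/t → 0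
    have hzero : Filter.Tendsto (fun t : ℕ => ((T:ℝ) + 1)/t) Filter.atTop (nhds 0) :=
      tendsto_const_div_atTop_nhds_zero_nat _
    have hev : ∀ᶠ t : ℕ in Filter.atTop, ((T:ℝ) + 1)/t ≤ c/2 := by
      have := hzero.eventually (ge_mem_nhds (show (0:ℝ) < c/2 from hc2))
      filter_upwards [this] with t ht using ht
    filter_upwards [hev, Filter.eventually_gt_atTop T] with t h1 h2
    calc avg a t ≤ wstar a + c/2 + (T + 1)/t := bound t h2
    _ ≤ wstar a + c/2 + c/2 := by linarith
    _ = wstar a + c := by ring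
  -- final assembly
  intro a
  rw [Metric.tendsto_atTop]
  intro ε hε
  have hKpos : (0:ℝ) < K := by exact_mod_cast Nat.lt_of_lt_of_le Nat.zero_lt_one hK
  set δ : ℝ := ε / (2 * K) with hδ
  have hδpos : 0 < δ := by positivity
  have hall : ∀ᶠ t : ℕ in Filter.atTop, ∀ b, avg b t ≤ wstar b + δ :=
    (Filter.eventually_all).mpr (fun b => key b δ hδpos)
  have hKδ : (K:ℝ) * δ = ε/2 := by rw [hδ]; field_simp
  obtain ⟨N, hN⟩ := (Filter.eventually_atTop).mp hall
  refine ⟨max N 1, fun t ht => ?_⟩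
  have ht1 : 1 ≤ t := le_trans (le_max_right _ _) ht
  have htN : N ≤ t := le_trans (le_max_left _ _) ht
  have hub : avg a t ≤ wstar a + δ := hN t htN a
  have hlb : wstar a - ε/2 ≤ avg a t := by
    have hsum := havg_sum t ht1
    have h1 : avg a t = 1 - ∑ b ∈ Finset.univ.erase a, avg b t := by
      rw [← Finset.add_sum_erase _ _ (Finset.mem_univ a)] at hsum
      linarith
    have h2 : ∑ b ∈ Finset.univ.erase a, avg b t
        ≤ ∑ b ∈ Finset.univ.erase a, (wstar b + δ) :=
      Finset.sum_le_sum (fun b _ => hN t htN b)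
    have h3 : ∑ b ∈ Finset.univ.erase a, (wstar b + δ)
        = (∑ b ∈ Finset.univ.erase a, wstar b) + (Finset.univ.erase a).card * δ := by
      rw [Finset.sum_add_distrib, Finset.sum_const, nsmul_eq_mul]
    have h4 : ∑ b ∈ Finset.univ.erase a, wstar b = 1 - wstar a := by
      rw [← Finset.add_sum_erase _ _ (Finset.mem_univ a)] at hw_sum
      linarith
    have h5 : ((Finset.univ.erase a).card : ℝ) * δ ≤ (K:ℝ) * δ := by
      have : (Finset.univ.erase a).card ≤ K := by
        calc (Finset.univ.erase a).card ≤ (Finset.univ : Finset (Fin K)).card :=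
              Finset.card_le_card (Finset.erase_subset _ _)
        _ = K := by simp
      exact mul_le_mul_of_nonneg_right (by exact_mod_cast this) hδpos.le
    rw [h1]
    have := hKδ
    linarith
  have hδle : δ ≤ ε/2 := by
    rw [← hKδ]
    nlinarith [hδpos, (show (1:ℝ) ≤ K by exact_mod_cast hK)]
  rw [Real.dist_eq, abs_lt]
  constructor <;> linarith
end

section
/- Let b > 0 and C ∈ ℝ. For each δ ∈ (0,1) define τ(δ) = min{ t ∈ {1,2,3,…} : b·t ≥ ln(t/δ) + C }; this set is nonempty since b·t grows linearly in t while ln(t/δ) + C grows logarithmically. Then limsup_{δ → 0⁺} τ(δ) / ln(1/δ) ≤ 1/b. (Deterministic core of the proof of Lemma 1: the first time a linear drift of slope b exceeds the threshold ln(t/δ) + C is asymptotically at most ln(1/δ)/b as δ → 0.) -/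
open Filter Real

private lemma stl_eventually (b C : ℝ) (hb : 0 < b) {ε : ℝ} (hε : 0 < ε) :
    ∀ᶠ x : ℝ in atTop,
      0 < x ∧ 1 ≤ (1/b + ε) * x ∧ Real.log (1/b + ε) + Real.log x + b + C ≤ b * ε * x := by
  have h1 : ∀ᶠ x : ℝ in atTop, Real.log x ≤ (b * ε / 2) * x := by
    have := Real.isLittleO_log_id_atTop.def (by positivity : (0:ℝ) < b * ε / 2)
    filter_upwards [this, eventually_ge_atTop (0:ℝ)] with x hx hx0
    simpa [abs_of_nonneg hx0, id] using (le_abs_self _).trans hx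
  have h2 : ∀ᶠ x : ℝ in atTop,
      Real.log (1/b + ε) + b + C ≤ (b * ε / 2) * x := by
    have : Tendsto (fun x : ℝ => (b * ε / 2) * x) atTop atTop :=
      Tendsto.const_mul_atTop (by positivity) tendsto_id
    exact this.eventually_ge_atTop _
  have h3 : ∀ᶠ x : ℝ in atTop, 1 ≤ (1/b + ε) * x := by
    have : Tendsto (fun x : ℝ => (1/b + ε) * x) atTop atTop :=
      Tendsto.const_mul_atTop (by positivity) tendsto_id
    exact this.eventually_ge_atTop _
  filter_upwards [h1, h2, h3, eventually_gt_atTop (0:ℝ)] with x hx1 hx2 hx3 hx0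
  refine ⟨hx0, hx3, ?_⟩
  nlinarith

/-- Deterministic core of the proof of Lemma 1: the first time `t ≥ 1` at which a linear
drift `b·t` exceeds the threshold `ln(t/δ) + C` is asymptotically at most `ln(1/δ)/b`
as `δ → 0⁺`. -/
theorem stopping_time_limsup (b C : ℝ) (hb : 0 < b)
    (τ : ℝ → ℕ)
    (hτ : ∀ δ : ℝ, τ δ = sInf {t : ℕ | 1 ≤ t ∧ Real.log (t / δ) + C ≤ b * t}) :
    Filter.limsup (fun δ : ℝ => (τ δ : ℝ) / Real.log (1 / δ))
      (nhdsWithin 0 (Set.Ioi 0)) ≤ 1 / b := by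
  have hL : Tendsto (fun δ : ℝ => Real.log (1/δ)) (nhdsWithin 0 (Set.Ioi 0)) atTop := by
    have hneg : Tendsto (fun δ : ℝ => -Real.log δ) (nhdsWithin 0 (Set.Ioi 0)) atTop :=
      tendsto_neg_atBot_atTop.comp Real.tendsto_log_nhdsGT_zero
    refine hneg.congr' ?_
    filter_upwards [self_mem_nhdsWithin] with δ (hδ : (0:ℝ) < δ)
    rw [one_div, Real.log_inv]
  -- key eventual bound
  have key : ∀ ε : ℝ, 0 < ε → ∀ᶠ δ in nhdsWithin (0:ℝ) (Set.Ioi 0),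
      (τ δ : ℝ) / Real.log (1/δ) ≤ 1/b + ε := by
    intro ε hε
    filter_upwards [hL.eventually (stl_eventually b C hb hε), self_mem_nhdsWithin]
      with δ hx (hδ : (0:ℝ) < δ)
    obtain ⟨hx0, hx1, hx2⟩ := hx
    set x := Real.log (1/δ) with hxdef
    set N := ⌊(1/b + ε) * x⌋₊ with hN
    have hN1 : 1 ≤ N := by
      rw [hN]
      exact Nat.le_floor (by exact_mod_cast hx1)
    have hNle : (N : ℝ) ≤ (1/b + ε) * x := Nat.floor_le (by positivity)
    have hNgt : (1/b + ε) * x - 1 < (N : ℝ) := Nat.sub_one_lt_floor _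
    have hNpos : (0:ℝ) < N := by exact_mod_cast hN1
    have hlogx : Real.log δ = -x := by
      rw [hxdef, one_div, Real.log_inv, neg_neg]
    have hmem : N ∈ {t : ℕ | 1 ≤ t ∧ Real.log (t / δ) + C ≤ b * t} := by
      refine ⟨hN1, ?_⟩
      have hlogN : Real.log ((N : ℝ) / δ) = Real.log N + x := by
        rw [Real.log_div (ne_of_gt hNpos) (ne_of_gt hδ), hlogx]; ring
      rw [hlogN]
      have hlogNle : Real.log N ≤ Real.log (1/b + ε) + Real.log x := by
        calc Real.log N ≤ Real.log ((1/b + ε) * x) := Real.log_le_log hNpos hNle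
          _ = Real.log (1/b + ε) + Real.log x := Real.log_mul (by positivity) (ne_of_gt hx0)
      have hb1 : b * (1/b) = 1 := by field_simp
      nlinarith [mul_lt_mul_of_pos_left hNgt hb]
    have hτle : τ δ ≤ N := by rw [hτ]; exact Nat.sInf_le hmem
    have : (τ δ : ℝ) ≤ (1/b + ε) * x := le_trans (by exact_mod_cast hτle) hNle
    rw [div_le_iff₀ hx0]
    linarith
  -- coboundedness
  have hcb : Filter.IsCoboundedUnder (· ≤ ·)
      (nhdsWithin (0:ℝ) (Set.Ioi 0)) (fun δ : ℝ => (τ δ : ℝ) / Real.log (1/δ)) := by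
    refine Filter.isCoboundedUnder_le_of_eventually_le (nhdsWithin (0:ℝ) (Set.Ioi 0)) (x := 0) ?_
    filter_upwards [hL.eventually (eventually_gt_atTop (0:ℝ))] with δ hδ
    positivity
  have : ∀ ε : ℝ, 0 < ε →
      Filter.limsup (fun δ : ℝ => (τ δ : ℝ) / Real.log (1/δ))
        (nhdsWithin 0 (Set.Ioi 0)) ≤ 1/b + ε := fun ε hε =>
    Filter.limsup_le_of_le hcb (key ε hε)
  exact le_of_forall_pos_le_add this
end

section
/- Let K ≥ 2 and let d_1, …, d_K be positive real numbers, and set S = Σ_{a=1}^K d_a^{-1}. Define the allocation v ∈ ℝ^K by v_a = d_a^{-1} / (S + d_K^{-1}) for 1 ≤ a ≤ K−1 and v_K = 2·d_K^{-1} / (S + d_K^{-1}). Then v ∈ Δ_K, min_{1 ≤ a ≤ K} v_a · d_a = (S + d_K^{-1})^{-1}, and this is strictly smaller than sup_{w ∈ Δ_K} min_{1 ≤ a ≤ K} w_a · d_a = S^{-1}. (The strict sub-optimality, proved in the appendix, of the two-pass allocation that solves the CHM problem by running the lowest-mean test of Kaufmann et al. twice, compared with the optimal allocation of Theorem 1 in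 the infeasible case.) -/
lemma minval_le_inv_sum {K : ℕ} (hK : 2 ≤ K) (dv : Fin K → ℝ) (hdv : ∀ a, 0 < dv a)
    (S : ℝ) (hS : S = ∑ a, (dv a)⁻¹)
    (w : Fin K → ℝ) (hw0 : ∀ a, 0 ≤ w a) (hw1 : (∑ a, w a) = 1) :
    sInf (Set.range fun a => w a * dv a) ≤ S⁻¹ := by
  have hKpos : 0 < K := by omega
  haveI : Nonempty (Fin K) := ⟨⟨0, hKpos⟩⟩
  set m := sInf (Set.range fun a => w a * dv a) with hm
  have hbdd : BddBelow (Set.range fun a => w a * dv a) :=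
    (Set.finite_range _).bddBelow
  have hle : ∀ a, m ≤ w a * dv a := fun a => csInf_le hbdd ⟨a, rfl⟩
  have hSpos : 0 < S := by
    rw [hS]
    exact Finset.sum_pos (fun a _ => inv_pos.mpr (hdv a)) Finset.univ_nonempty
  have hmS : m * S ≤ 1 := by
    have h : ∀ a, m * (dv a)⁻¹ ≤ w a := by
      intro a
      have hda := hdv a
      have h2 := mul_le_mul_of_nonneg_right (hle a) (inv_pos.mpr hda).le
      rwa [mul_assoc, mul_inv_cancel₀ hda.ne', mul_one] at h2
    calc m * S = ∑ a, m * (dv a)⁻¹ := by rw [hS, Finset.mul_sum]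
      _ ≤ ∑ a, w a := Finset.sum_le_sum (fun a _ => h a)
      _ = 1 := hw1
  have hSinv : 0 < S⁻¹ := inv_pos.mpr hSpos
  nlinarith [mul_inv_cancel₀ hSpos.ne']

/-- Strict sub-optimality of the two-pass allocation: the allocation `v` obtained by
running the lowest-mean test twice (which doubles the weight of the last arm) achieves
value `(S + d_K⁻¹)⁻¹`, which is strictly smaller than the optimal value
`S⁻¹ = sup_{w ∈ Δ_K} min_a w_a d_a`, where `S = Σ_a d_a⁻¹`. -/
theorem two_pass_allocation_suboptimal
    {K : ℕ} (hK : 2 ≤ K) (dv : Fin K → ℝ) (hdv : ∀ a, 0 < dv a)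
    (aK : Fin K) (haK : (aK : ℕ) = K - 1)
    (S : ℝ) (hS : S = ∑ a, (dv a)⁻¹)
    (v : Fin K → ℝ)
    (hv : v = fun a =>
      if a = aK then 2 * (dv aK)⁻¹ / (S + (dv aK)⁻¹)
      else (dv a)⁻¹ / (S + (dv aK)⁻¹)) :
    ((∀ a, 0 ≤ v a) ∧ (∑ a, v a) = 1) ∧
    sInf (Set.range fun a => v a * dv a) = (S + (dv aK)⁻¹)⁻¹ ∧
    sSup {x : ℝ | ∃ w : Fin K → ℝ, (∀ a, 0 ≤ w a) ∧ (∑ a, w a) = 1 ∧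
        x = sInf (Set.range fun a => w a * dv a)} = S⁻¹ ∧
    (S + (dv aK)⁻¹)⁻¹ < S⁻¹ := by
  have hKpos : 0 < K := by omega
  haveI : Nonempty (Fin K) := ⟨⟨0, hKpos⟩⟩
  have hSpos : 0 < S := by
    rw [hS]
    exact Finset.sum_pos (fun a _ => inv_pos.mpr (hdv a)) Finset.univ_nonempty
  have hKinv : 0 < (dv aK)⁻¹ := inv_pos.mpr (hdv aK)
  have hDpos : 0 < S + (dv aK)⁻¹ := by linarith
  set D := S + (dv aK)⁻¹ with hD
  -- b : an index different from aK
  have hb : ∃ b : Fin K, b ≠ aK := by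
    refine ⟨⟨0, hKpos⟩, fun h => ?_⟩
    have : (0 : ℕ) = K - 1 := by rw [← haK, ← h]
    omega
  obtain ⟨b, hbne⟩ := hb
  refine ⟨⟨?_, ?_⟩, ?_, ?_, ?_⟩
  · intro a
    rw [hv]
    dsimp only
    split
    · positivity
    · have := (hdv a).le
      positivity
  · rw [hv]
    have : ∀ a ∈ Finset.univ, (if a = aK then 2 * (dv aK)⁻¹ / D else (dv a)⁻¹ / D)
        = (dv a)⁻¹ / D + (if a = aK then (dv aK)⁻¹ / D else 0) := by
      intro a _
      by_cases h : a = aK <;> simp [h] <;> ring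
    rw [Finset.sum_congr rfl this, Finset.sum_add_distrib, Finset.sum_ite_eq' _ aK]
    simp only [Finset.mem_univ, if_true]
    rw [← Finset.sum_div, ← hS]
    rw [← add_div, ← hD, div_self hDpos.ne']
  · -- sInf computation for v
    have hval : ∀ a, v a * dv a = if a = aK then 2 * D⁻¹ else D⁻¹ := by
      intro a
      rw [hv]
      dsimp only
      by_cases h : a = aK <;> simp [h] <;> field_simp
      · rw [div_self (hdv aK).ne']
      · rw [div_self (hdv a).ne']
    apply le_antisymm
    · calc sInf (Set.range fun a => v a * dv a) ≤ v b * dv b :=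
            csInf_le (Set.finite_range _).bddBelow ⟨b, rfl⟩
        _ = D⁻¹ := by rw [hval]; simp [hbne]
    · apply le_csInf (Set.range_nonempty _)
      rintro x ⟨a, rfl⟩
      show D⁻¹ ≤ v a * dv a
      rw [hval]
      have : 0 < D⁻¹ := inv_pos.mpr hDpos
      split <;> linarith
  · -- sSup = S⁻¹
    set T := {x : ℝ | ∃ w : Fin K → ℝ, (∀ a, 0 ≤ w a) ∧ (∑ a, w a) = 1 ∧
        x = sInf (Set.range fun a => w a * dv a)} with hT
    have hub : ∀ x ∈ T, x ≤ S⁻¹ := by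
      rintro x ⟨w, hw0, hw1, rfl⟩
      exact minval_le_inv_sum hK dv hdv S hS w hw0 hw1
    have hmem : S⁻¹ ∈ T := by
      refine ⟨fun a => (dv a)⁻¹ / S,
        fun a => div_nonneg (inv_pos.mpr (hdv a)).le hSpos.le, ?_, ?_⟩
      · rw [← Finset.sum_div, ← hS, div_self hSpos.ne']
      · have : (fun a => (dv a)⁻¹ / S * dv a) = fun _ : Fin K => S⁻¹ := by
          funext a
          field_simp
          rw [div_self (hdv a).ne']
        rw [this, Set.range_const, csInf_singleton]
    exact le_antisymm (csSup_le ⟨S⁻¹, hmem⟩ hub) (le_csSup ⟨S⁻¹, hub⟩ hmem)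
  · have : S < D := by rw [hD]; linarith
    exact inv_strictAnti₀ hSpos this
end
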